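/- arXiv:1303.5362 — 10 statements merged into one kernel-verified Lean document; each statement's English description precedes it below -/
import Mathlib

section
/- Let (u,w) ∈ ℝ × ℝ with w > 0. Then the steady-state equations (a1·u·w/(1+u·w) − d1)·u = 0 and −w − u²·w + κ1 = 0 hold simultaneously if and only if (u,w) = (0, κ1), or (u,w) = (u₊, w₊), or (u,w) = (u₋, w₋). In particular, the kinetic system has exactly three constant steady states with positive w-component. -/
set_option maxHeartbeats 1600000 in
/-- Steady states of the kinetic system: with `w > 0`, the steady-state equations
`(a1·u·w/(1+u·w) − d1)·u = 0` and `−w − u²·w + κ1 = 0` hold iff `(u,w)` is one of the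
three constant steady states `(0, κ1)`, `(u₊, w₊)`, `(u₋, w₋)`. -/
theorem stmt_0 (a1 d1 κ1 : ℝ) (ha1 : 0 < a1) (hd1 : 0 < d1) (hκ1 : 0 < κ1)
    (had : d1 < a1) (hκ : 2 * d1 / (a1 - d1) < κ1)
    (wp wm up um : ℝ)
    (hwp : wp = κ1 / 2 + Real.sqrt ((κ1 / 2) ^ 2 - (d1 / (a1 - d1)) ^ 2))
    (hwm : wm = κ1 / 2 - Real.sqrt ((κ1 / 2) ^ 2 - (d1 / (a1 - d1)) ^ 2))
    (hup : up = (d1 / (a1 - d1)) / wp)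
    (hum : um = (d1 / (a1 - d1)) / wm)
    (u w : ℝ) (hw : 0 < w) :
    ((a1 * u * w / (1 + u * w) - d1) * u = 0 ∧ -w - u ^ 2 * w + κ1 = 0) ↔
      (u = 0 ∧ w = κ1) ∨ (u = up ∧ w = wp) ∨ (u = um ∧ w = wm) := by
  have ha : 0 < a1 - d1 := by linarith
  obtain ⟨c, hc_def⟩ : ∃ c : ℝ, c = d1 / (a1 - d1) := ⟨_, rfl⟩
  rw [← hc_def] at hwp hwm hup hum
  have hc : 0 < c := hc_def ▸ div_pos hd1 ha
  have h2c : 2 * c = 2 * d1 / (a1 - d1) := by rw [hc_def]; ring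
  have hcκ : c < κ1 / 2 := by linarith [h2c ▸ hκ]
  have hnn : (0:ℝ) ≤ (κ1 / 2) ^ 2 - c ^ 2 := by nlinarith
  obtain ⟨s, hs_def⟩ : ∃ s : ℝ, s = Real.sqrt ((κ1 / 2) ^ 2 - c ^ 2) := ⟨_, rfl⟩
  rw [← hs_def] at hwp hwm
  have hs0 : 0 ≤ s := hs_def ▸ Real.sqrt_nonneg _
  have hs2 : s ^ 2 = (κ1 / 2) ^ 2 - c ^ 2 := hs_def ▸ Real.sq_sqrt hnn
  have hslt : s < κ1 / 2 := by nlinarith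
  have hwp0 : 0 < wp := by rw [hwp]; positivity
  have hwm0 : 0 < wm := by rw [hwm]; linarith
  have hsum : wp + wm = κ1 := by rw [hwp, hwm]; ring
  have hprod : wp * wm = c ^ 2 := by rw [hwp, hwm]; linear_combination -hs2
  have hd : (a1 - d1) * c = d1 := by rw [hc_def]; field_simp
  have hquadp : wp ^ 2 - κ1 * wp + c ^ 2 = 0 := by rw [hwp]; linear_combination hs2
  have hquadm : wm ^ 2 - κ1 * wm + c ^ 2 = 0 := by rw [hwm]; linear_combination hs2
  constructor
  · rintro ⟨h1, h2⟩
    rcases mul_eq_zero.mp h1 with hA | hu0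
    · -- nontrivial case
      have hden : 1 + u * w ≠ 0 := by
        intro h0
        rw [h0, div_zero] at hA
        linarith
      have hA' : a1 * u * w = d1 * (1 + u * w) := by
        field_simp at hA; linarith [hA]
      have huw : u * w = c := by
        rw [hc_def]
        rw [eq_div_iff (ne_of_gt ha)]
        linarith [hA']
      have hquad : w ^ 2 - κ1 * w + c ^ 2 = 0 := by
        linear_combination (-w) * h2 - (u * w + c) * huw
      have hfac : (w - wp) * (w - wm) = 0 := by
        linear_combination hquad - w * hsum + hprod
      rcases mul_eq_zero.mp hfac with h | h
      · right; left
        have hww : w = wp := by linarith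
        refine ⟨?_, hww⟩
        rw [hup, eq_div_iff (ne_of_gt hwp0), ← hww]
        exact huw
      · right; right
        have hww : w = wm := by linarith
        refine ⟨?_, hww⟩
        rw [hum, eq_div_iff (ne_of_gt hwm0), ← hww]
        exact huw
    · left
      refine ⟨hu0, ?_⟩
      rw [hu0] at h2; nlinarith [h2]
  · rintro (⟨hu, hweq⟩ | ⟨hu, hweq⟩ | ⟨hu, hweq⟩)
    · rw [hu, hweq]
      constructor
      · ring
      · ring
    · have huw : up * wp = c := by rw [hup]; field_simp
      have hden : (0:ℝ) < 1 + up * wp := by rw [huw]; linarith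
      rw [hu, hweq]
      constructor
      · have hh : a1 * up * wp / (1 + up * wp) - d1 = 0 := by
          rw [div_sub' (ne_of_gt hden)]
          rw [div_eq_zero_iff]
          left
          linear_combination hd + (a1 - d1) * huw
        rw [hh]; ring
      · have e : (c / wp) ^ 2 * wp = c ^ 2 / wp := by
          rw [div_pow, sq wp, ← div_div, div_mul_cancel₀ _ (ne_of_gt hwp0)]
        have e2 : c ^ 2 / wp = κ1 - wp := by
          rw [div_eq_iff (ne_of_gt hwp0)]; linear_combination hquadp
        rw [hup, e, e2]; ring
    · have huw : um * wm = c := by rw [hum]; field_simp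
      have hden : (0:ℝ) < 1 + um * wm := by rw [huw]; linarith
      rw [hu, hweq]
      constructor
      · have hh : a1 * um * wm / (1 + um * wm) - d1 = 0 := by
          rw [div_sub' (ne_of_gt hden)]
          rw [div_eq_zero_iff]
          left
          linear_combination hd + (a1 - d1) * huw
        rw [hh]; ring
      · have e : (c / wm) ^ 2 * wm = c ^ 2 / wm := by
          rw [div_pow, sq wm, ← div_div, div_mul_cancel₀ _ (ne_of_gt hwm0)]
        have e2 : c ^ 2 / wm = κ1 - wm := by
          rw [div_eq_iff (ne_of_gt hwm0)]; linear_combination hquadm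
        rw [hum, e, e2]; ring
end

section
/- The determinant of J(w₊) is negative, and consequently J(w₊) has a positive real eigenvalue: there exists λ > 0 such that ((a1−d1)·d1/a1 − λ)·(−(1 + (d1/((a1−d1)·w₊))²) − λ) − (d1²/(a1·w₊²))·(−2·d1/(a1−d1)) = 0. Hence (u₊, w₊) is an unstable steady state of the kinetic system. -/
/-- Generic fact: if `A*D - B*C < 0`, the quadratic `(A-λ)(D-λ) - BC` has a positive root. -/
lemma quad_pos_root (A D B C : ℝ) (h : A * D - B * C < 0) :
    ∃ lam : ℝ, 0 < lam ∧ (A - lam) * (D - lam) - B * C = 0 := by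
  set T := A + D with hT
  have harg : 0 ≤ T ^ 2 - 4 * (A * D - B * C) := by nlinarith [sq_nonneg T]
  set s := Real.sqrt (T ^ 2 - 4 * (A * D - B * C)) with hs
  have hs0 : 0 ≤ s := Real.sqrt_nonneg _
  have hs2 : s ^ 2 = T ^ 2 - 4 * (A * D - B * C) := Real.sq_sqrt harg
  refine ⟨(T + s) / 2, ?_, ?_⟩
  · nlinarith [mul_self_nonneg (s - T)]
  · linear_combination hs2 / 4

/-- `det J(w₊) < 0`, hence `J(w₊)` has a positive real eigenvalue: there is `λ > 0`
solving the characteristic equation of `J(w₊)`. Thus `(u₊, w₊)` is an unstable steady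
state of the kinetic system. -/
theorem stmt_4 (a1 d1 κ1 : ℝ) (ha1 : 0 < a1) (hd1 : 0 < d1) (hκ1 : 0 < κ1)
    (had : d1 < a1) (hκ : 2 * d1 / (a1 - d1) < κ1)
    (wp : ℝ)
    (hwp : wp = κ1 / 2 + Real.sqrt ((κ1 / 2) ^ 2 - (d1 / (a1 - d1)) ^ 2)) :
    ((a1 - d1) * d1 / a1) * (-(1 + (d1 / ((a1 - d1) * wp)) ^ 2)) -
        (d1 ^ 2 / (a1 * wp ^ 2)) * (-2 * d1 / (a1 - d1)) < 0 ∧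
      ∃ lam : ℝ, 0 < lam ∧
        ((a1 - d1) * d1 / a1 - lam) * (-(1 + (d1 / ((a1 - d1) * wp)) ^ 2) - lam) -
          (d1 ^ 2 / (a1 * wp ^ 2)) * (-2 * d1 / (a1 - d1)) = 0 := by
  have had' : 0 < a1 - d1 := by linarith
  have he : 0 < d1 / (a1 - d1) := div_pos hd1 had'
  have hκ' : 2 * d1 < κ1 * (a1 - d1) := (div_lt_iff₀ had').mp hκ
  have hκe : d1 / (a1 - d1) < κ1 / 2 := by
    rw [div_lt_div_iff₀ had' (by norm_num : (0:ℝ) < 2)]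
    nlinarith
  have hwκ : κ1 / 2 ≤ wp := by
    rw [hwp]; nlinarith [Real.sqrt_nonneg ((κ1 / 2) ^ 2 - (d1 / (a1 - d1)) ^ 2)]
  have hwe : d1 / (a1 - d1) < wp := lt_of_lt_of_le hκe hwκ
  have hwpos : 0 < wp := lt_trans he hwe
  have hdw : d1 < (a1 - d1) * wp := by
    rw [div_lt_iff₀ had'] at hwe; linarith [hwe]
  have hdet : ((a1 - d1) * d1 / a1) * (-(1 + (d1 / ((a1 - d1) * wp)) ^ 2)) -
      (d1 ^ 2 / (a1 * wp ^ 2)) * (-2 * d1 / (a1 - d1)) < 0 := by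
    have heq : ((a1 - d1) * d1 / a1) * (-(1 + (d1 / ((a1 - d1) * wp)) ^ 2)) -
        (d1 ^ 2 / (a1 * wp ^ 2)) * (-2 * d1 / (a1 - d1)) =
        (d1 ^ 2 - ((a1 - d1) * wp) ^ 2) * d1 / (a1 * (a1 - d1) * wp ^ 2) := by
      field_simp
      ring
    rw [heq]
    apply div_neg_of_neg_of_pos
    · have : d1 ^ 2 < ((a1 - d1) * wp) ^ 2 := by nlinarith
      nlinarith
    · positivity
  exact ⟨hdet, quad_pos_root _ _ _ _ hdet⟩
end

section
/- The determinant of J(w₋) is positive: ((a1−d1)·d1/a1)·(−(1 + (d1/((a1−d1)·w₋))²)) − (d1²/(a1·w₋²))·(−2·d1/(a1−d1)) > 0. -/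
/-- The determinant of `J(w₋)` is positive. -/
theorem stmt_5 (a1 d1 κ1 : ℝ) (ha1 : 0 < a1) (hd1 : 0 < d1) (hκ1 : 0 < κ1)
    (had : d1 < a1) (hκ : 2 * d1 / (a1 - d1) < κ1)
    (wm : ℝ)
    (hwm : wm = κ1 / 2 - Real.sqrt ((κ1 / 2) ^ 2 - (d1 / (a1 - d1)) ^ 2)) :
    0 < ((a1 - d1) * d1 / a1) * (-(1 + (d1 / ((a1 - d1) * wm)) ^ 2)) -
        (d1 ^ 2 / (a1 * wm ^ 2)) * (-2 * d1 / (a1 - d1)) := by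
  have ha : 0 < a1 - d1 := by linarith
  set c : ℝ := d1 / (a1 - d1) with hc_def
  have hc : 0 < c := div_pos hd1 ha
  have hcκ : c < κ1 / 2 := by
    rw [hc_def, div_lt_div_iff₀ ha (by norm_num : (0:ℝ) < 2)]
    rw [div_lt_iff₀ ha] at hκ
    linarith
  have hnn : 0 ≤ (κ1 / 2) ^ 2 - c ^ 2 := by nlinarith
  set s : ℝ := Real.sqrt ((κ1 / 2) ^ 2 - c ^ 2) with hs_def
  have hs0 : 0 ≤ s := Real.sqrt_nonneg _
  have hs2 : s ^ 2 = (κ1 / 2) ^ 2 - c ^ 2 := Real.sq_sqrt hnn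
  have hslt : s < κ1 / 2 := by nlinarith
  have hwpos : 0 < wm := by rw [hwm]; linarith
  have hwlt : wm < c := by
    have hkey : (κ1 / 2 - c) ^ 2 < s ^ 2 := by nlinarith
    have : κ1 / 2 - c < s := by nlinarith
    rw [hwm]; linarith
  have hcw : d1 > (a1 - d1) * wm := by
    rw [hc_def] at hwlt
    calc (a1 - d1) * wm < (a1 - d1) * (d1 / (a1 - d1)) := by
          exact mul_lt_mul_of_pos_left hwlt ha
      _ = d1 := by field_simp
  have hw2 : 0 < wm ^ 2 := by positivity
  rw [div_mul_eq_mul_div, div_mul_eq_mul_div, div_sub_div _ _ (ne_of_gt ha1)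
    (by positivity : a1 * wm ^ 2 ≠ 0)]
  apply div_pos
  · have h1 : d1 ^ 2 > ((a1 - d1) * wm) ^ 2 := by
      nlinarith [mul_pos (sub_pos.mpr hcw) (by positivity : (0:ℝ) < d1 + (a1 - d1) * wm)]
    have hexp : (d1 / ((a1 - d1) * wm)) ^ 2 = d1 ^ 2 / ((a1 - d1) * wm) ^ 2 := by
      rw [div_pow]
    field_simp
    have key : 0 < (a1 * wm ^ 2 * d1 * (a1 - d1) ^ 2) * (d1 ^ 2 - ((a1 - d1) * wm) ^ 2) :=
      mul_pos (by positivity) (by linarith)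
    nlinarith [key]
  · positivity
end

section
/- If in addition κ1² > 2·d1³/(a1·(a1−d1)), then the trace of J(w₋) is negative; combined with det J(w₋) > 0, this implies that every complex root λ of the characteristic equation λ² − trace(J(w₋))·λ + det(J(w₋)) = 0 has negative real part, i.e. (u₋, w₋) is a linearly stable steady state of the kinetic system. -/
set_option maxHeartbeats 1000000 in
/-- If moreover `κ1² > 2·d1³/(a1·(a1−d1))`, then `trace J(w₋) < 0`; together with
`det J(w₋) > 0` this forces every complex root of `λ² − tr·λ + det = 0` to have negative
real part, i.e. `(u₋, w₋)` is a linearly stable steady state of the kinetic system. -/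
theorem stmt_6 (a1 d1 κ1 : ℝ) (ha1 : 0 < a1) (hd1 : 0 < d1) (hκ1 : 0 < κ1)
    (had : d1 < a1) (hκ : 2 * d1 / (a1 - d1) < κ1)
    (hκ2 : 2 * d1 ^ 3 / (a1 * (a1 - d1)) < κ1 ^ 2)
    (wm tr det : ℝ)
    (hwm : wm = κ1 / 2 - Real.sqrt ((κ1 / 2) ^ 2 - (d1 / (a1 - d1)) ^ 2))
    (htr : tr = (a1 - d1) * d1 / a1 + (-(1 + (d1 / ((a1 - d1) * wm)) ^ 2)))
    (hdet : det = ((a1 - d1) * d1 / a1) * (-(1 + (d1 / ((a1 - d1) * wm)) ^ 2)) -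
      (d1 ^ 2 / (a1 * wm ^ 2)) * (-2 * d1 / (a1 - d1))) :
    tr < 0 ∧
      ∀ lam : ℂ, lam ^ 2 - (tr : ℂ) * lam + (det : ℂ) = 0 → lam.re < 0 := by
  have had' : (0:ℝ) < a1 - d1 := by linarith
  have hane : a1 ≠ 0 := ne_of_gt ha1
  have hadne : a1 - d1 ≠ 0 := ne_of_gt had'
  set c : ℝ := d1 / (a1 - d1) with hc
  have hcpos : 0 < c := div_pos hd1 had'
  have hκc : 2 * c < κ1 := by
    have : 2 * c = 2 * d1 / (a1 - d1) := by rw [hc]; ring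
    linarith [this ▸ hκ]
  have hΔpos : (0:ℝ) < (κ1 / 2) ^ 2 - c ^ 2 := by nlinarith
  set s : ℝ := Real.sqrt ((κ1 / 2) ^ 2 - c ^ 2) with hsdef
  have hs2 : s ^ 2 = (κ1 / 2) ^ 2 - c ^ 2 := Real.sq_sqrt hΔpos.le
  have hspos : 0 < s := Real.sqrt_pos.mpr hΔpos
  have hslt : s < κ1 / 2 := by nlinarith
  have hwmpos : 0 < wm := by rw [hwm]; linarith
  have hwmlt : wm < κ1 / 2 := by rw [hwm]; linarith
  have hquad : wm * (κ1 - wm) = c ^ 2 := by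
    rw [hwm]; nlinarith [hs2]
  have hwmltc : wm < c := by nlinarith
  have hwne : wm ≠ 0 := ne_of_gt hwmpos
  have hq : d1 / ((a1 - d1) * wm) = c / wm := by rw [hc, div_div]
  have hαpos : 0 < (a1 - d1) * d1 / a1 := by positivity
  have h2ac : 2 * ((a1 - d1) * d1 / a1) * c ^ 2 < κ1 ^ 2 := by
    have he : 2 * ((a1 - d1) * d1 / a1) * c ^ 2 = 2 * d1 ^ 3 / (a1 * (a1 - d1)) := by
      rw [hc]; field_simp
    linarith [he ▸ hκ2]
  have hwmsmall : wm * κ1 < 2 * c ^ 2 := by nlinarith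
  have hαwm : (a1 - d1) * d1 / a1 * wm < κ1 := by
    nlinarith [mul_lt_mul_of_pos_left hwmsmall hαpos]
  have htrw : tr * wm ^ 2 = (a1 - d1) * d1 / a1 * wm ^ 2 - wm ^ 2 - c ^ 2 := by
    rw [htr, hq]; field_simp; ring
  have htrneg : tr < 0 := by
    nlinarith [mul_lt_mul_of_pos_left hαwm hwmpos, mul_pos hwmpos hwmpos]
  have hdetw : det * wm ^ 2 = (a1 - d1) * d1 / a1 * (c ^ 2 - wm ^ 2) := by
    rw [hdet, hq, hc]; field_simp; ring
  have hc2 : wm ^ 2 < c ^ 2 := by nlinarith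
  have hdetpos : 0 < det := by
    nlinarith [mul_pos hαpos (sub_pos.mpr hc2), mul_pos hwmpos hwmpos]
  refine ⟨htrneg, ?_⟩
  intro lam heq
  have hre := congrArg Complex.re heq
  have him := congrArg Complex.im heq
  simp [pow_two, Complex.add_re, Complex.sub_re, Complex.mul_re, Complex.mul_im,
    Complex.add_im, Complex.sub_im, Complex.ofReal_re, Complex.ofReal_im] at hre him
  by_cases hy : lam.im = 0
  · rw [hy] at hre
    simp at hre
    nlinarith [mul_self_nonneg lam.re, hdetpos, htrneg, hre]
  · have h2 : (2 * lam.re - tr) * lam.im = 0 := by nlinarith [him]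
    rcases mul_eq_zero.mp h2 with h | h
    · linarith
    · exact absurd h hy
end

section
/- Let a11, a12, a21, a22 be real numbers and Dw > 0. For k ∈ ℕ set c(k) := Dw·π²·k², Δ(k) := ((a11 + a22 − c(k))/2)² − (a11·a22 − a12·a21) + c(k)·a11, λ₊(k) := (a11 + a22 − c(k))/2 + √(Δ(k)) and λ₋(k) := (a11 + a22 − c(k))/2 − √(Δ(k)) (real square root). Then Δ(k) > 0 for all sufficiently large k, λ₊(k) converges to a11 as k → ∞, and λ₋(k) tends to −∞ as k → ∞. In particular, a11 and −∞ are the only limit points of the eigenvalues of the linearized reaction–diffusion–ODE operator. -/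
open Filter

/-- Asymptotics of the roots of the dispersion relation: `Δ(k) > 0` for all large `k`,
`λ₊(k) → a11` and `λ₋(k) → −∞` as `k → ∞`. Thus `a11` and `−∞` are the only limit
points of the eigenvalues of the linearized reaction–diffusion–ODE operator. -/
theorem stmt_9 (a11 a12 a21 a22 Dw : ℝ) (hDw : 0 < Dw)
    (c Δ lp lm : ℕ → ℝ)
    (hc : ∀ k : ℕ, c k = Dw * Real.pi ^ 2 * (k : ℝ) ^ 2)
    (hΔ : ∀ k : ℕ, Δ k =
      ((a11 + a22 - c k) / 2) ^ 2 - (a11 * a22 - a12 * a21) + c k * a11)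
    (hlp : ∀ k : ℕ, lp k = (a11 + a22 - c k) / 2 + Real.sqrt (Δ k))
    (hlm : ∀ k : ℕ, lm k = (a11 + a22 - c k) / 2 - Real.sqrt (Δ k)) :
    (∃ N : ℕ, ∀ k ≥ N, 0 < Δ k) ∧
      Tendsto lp atTop (nhds a11) ∧
      Tendsto lm atTop atBot := by
  set s : ℝ := a11 + a22 with hs
  set d : ℝ := a11 * a22 - a12 * a21 with hd
  -- c tends to infinity
  have hc_top : Tendsto c atTop atTop := by
    have h1 : Tendsto (fun k : ℕ => (k : ℝ) ^ 2) atTop atTop :=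
      (tendsto_pow_atTop two_ne_zero).comp (tendsto_natCast_atTop_atTop (R := ℝ))
    have h2 : 0 < Dw * Real.pi ^ 2 :=
      mul_pos hDw (pow_pos Real.pi_pos 2)
    have := h1.const_mul_atTop h2
    apply this.congr
    intro k; rw [hc k]
  set u : ℕ → ℝ := fun k => (c k)⁻¹ with hu_def
  have hu : Tendsto u atTop (nhds 0) := hc_top.inv_tendsto_atTop
  set g : ℕ → ℝ := fun k => ((s * u k - 1) / 2) ^ 2 - d * u k ^ 2 + a11 * u k with hg_def
  have hg : Tendsto g atTop (nhds (1 / 4)) := by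
    have : Tendsto g atTop (nhds (((s * 0 - 1) / 2) ^ 2 - d * 0 ^ 2 + a11 * 0)) := by
      exact ((((tendsto_const_nhds.mul hu).sub tendsto_const_nhds).div_const 2).pow 2).sub
        (tendsto_const_nhds.mul (hu.pow 2)) |>.add (tendsto_const_nhds.mul hu)
    convert this using 2
    norm_num
  have hsg : Tendsto (fun k => Real.sqrt (g k)) atTop (nhds (1 / 2)) := by
    have := (Real.continuous_sqrt.tendsto (1 / 4)).comp hg
    convert this using 2
    rfl
    rw [show (1 : ℝ) / 4 = (1 / 2 : ℝ) ^ 2 by norm_num, Real.sqrt_sq (by norm_num)]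
  have hcpos : ∀ᶠ k in atTop, 0 < c k := hc_top.eventually_gt_atTop 0
  have hgpos : ∀ᶠ k in atTop, 0 < g k :=
    hg.eventually (eventually_gt_nhds (by norm_num))
  -- Δ k = (c k)^2 * g k when c k ≠ 0
  have hΔg : ∀ k, 0 < c k → Δ k = (c k) ^ 2 * g k := by
    intro k hk
    rw [hΔ k, hg_def]
    simp only [hu_def]
    field_simp
  have hΔpos : ∀ᶠ k in atTop, 0 < Δ k := by
    filter_upwards [hcpos, hgpos] with k h1 h2
    rw [hΔg k h1]
    positivity
  refine ⟨?_, ?_, ?_⟩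
  · obtain ⟨N, hN⟩ := eventually_atTop.mp hΔpos
    exact ⟨N, hN⟩
  · -- lp tends to a11
    set D : ℕ → ℝ := fun k => Real.sqrt (g k) + (1 - s * u k) / 2 with hD_def
    have hD : Tendsto D atTop (nhds 1) := by
      have : Tendsto D atTop (nhds (1 / 2 + (1 - s * 0) / 2)) :=
        hsg.add ((tendsto_const_nhds.sub (tendsto_const_nhds.mul hu)).div_const 2)
      convert this using 2
      norm_num
    have hDpos : ∀ᶠ k in atTop, 0 < D k :=
      hD.eventually (eventually_gt_nhds (by norm_num))
    have hmain : Tendsto (fun k => (a11 - d * u k) / D k) atTop (nhds a11) := by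
      have : Tendsto (fun k => (a11 - d * u k) / D k) atTop (nhds ((a11 - d * 0) / 1)) :=
        (tendsto_const_nhds.sub (tendsto_const_nhds.mul hu)).div hD one_ne_zero
      convert this using 2
      norm_num
    refine Tendsto.congr' ?_ hmain
    filter_upwards [hcpos, hgpos, hDpos] with k h1 h2 h3
    have hsqrtΔ : Real.sqrt (Δ k) = c k * Real.sqrt (g k) := by
      rw [hΔg k h1, Real.sqrt_mul (sq_nonneg _), Real.sqrt_sq h1.le]
    have hr2 : Real.sqrt (g k) ^ 2 = g k := Real.sq_sqrt h2.le
    rw [hlp k, hsqrtΔ, div_eq_iff (ne_of_gt h3)]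
    simp only [hD_def]
    have huc : u k * c k = 1 := inv_mul_cancel₀ (ne_of_gt h1)
    set r := Real.sqrt (g k)
    have hgk : g k = ((s * u k - 1) / 2) ^ 2 - d * u k ^ 2 + a11 * u k := rfl
    -- goal: a11 - d * u k = ((s - c k)/2 + c k * r) * (r + (1 - s * u k)/2)
    have expand : ((s - c k) / 2 + c k * r) * (r + (1 - s * u k) / 2)
        = c k * r ^ 2 + (s - c k) * (1 - s * u k) / 4
          + r * ((s - c k) / 2 + c k * (1 - s * u k) / 2) := by ring
    have hrterm : (s - c k) / 2 + c k * (1 - s * u k) / 2 = 0 := by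
      have : c k * (s * u k) = s := by
        rw [mul_comm s (u k), ← mul_assoc, mul_comm (c k) (u k), huc, one_mul]
      nlinarith [this]
    rw [expand, hrterm, mul_zero, add_zero, hr2, hgk]
    have h1' : c k ≠ 0 := ne_of_gt h1
    have hu1 : u k = (c k)⁻¹ := rfl
    rw [hu1]
    field_simp
    ring
  · -- lm tends to -infinity
    have hbound : ∀ k, lm k ≤ (s - c k) / 2 := by
      intro k
      rw [hlm k]
      have := Real.sqrt_nonneg (Δ k)
      linarith
    have hsc : Tendsto (fun k => (s - c k) / 2) atTop atBot := by
      have h1 : Tendsto (fun k => s - c k) atTop atBot := by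
        have hn : Tendsto (fun k => -(c k)) atTop atBot :=
          tendsto_neg_atTop_atBot.comp hc_top
        have := tendsto_atBot_add_const_left atTop s hn
        apply this.congr
        intro k; ring
      exact h1.atBot_div_const (by norm_num)
    exact tendsto_atBot_mono hbound hsc
end

section
/- Assume a1 > d1 > 0 and Dw > 0, and let w > 0. Set a11 := (a1−d1)·d1/a1, a12 := d1²/(a1·w²), a21 := −2·d1/(a1−d1), a22 := −(1 + (d1/((a1−d1)·w))²) (the entries of J(w)). Then there exist N ∈ ℕ and a sequence λ : ℕ → ℝ such that for every k ≥ N one has λ(k) > 0 and disp(λ(k), k) = 0, and λ(k) → (a1−d1)·d1/a1 > 0 as k → ∞. In particular, the linearization of the reaction–diffusion–ODE system at the constant steady state (d1/((a1−d1)·w), w) possesses infinitely many positive eigenvalues, accumulating at (a1−d1)·d1/a1. -/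
open Filter

set_option maxHeartbeats 800000 in
/-- Infinitely many positive eigenvalues: for the Jacobian entries of `J(w)`, there is a
sequence `λ(k)` of positive roots of the dispersion relation for all large `k`, which
converges to `(a1−d1)·d1/a1 > 0`. -/
theorem stmt_10 (a1 d1 Dw : ℝ) (hd1 : 0 < d1) (had : d1 < a1) (hDw : 0 < Dw)
    (w : ℝ) (hw : 0 < w)
    (a11 a12 a21 a22 : ℝ)
    (h11 : a11 = (a1 - d1) * d1 / a1)
    (h12 : a12 = d1 ^ 2 / (a1 * w ^ 2))
    (h21 : a21 = -2 * d1 / (a1 - d1))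
    (h22 : a22 = -(1 + (d1 / ((a1 - d1) * w)) ^ 2)) :
    ∃ (N : ℕ) (lam : ℕ → ℝ),
      (∀ k ≥ N, 0 < lam k ∧
        (a11 - lam k) * (a22 - Dw * Real.pi ^ 2 * (k : ℝ) ^ 2 - lam k) - a12 * a21 = 0) ∧
      Tendsto lam atTop (nhds ((a1 - d1) * d1 / a1)) ∧
      0 < (a1 - d1) * d1 / a1 := by
  have ha1 : 0 < a1 := hd1.trans had
  have hsub : 0 < a1 - d1 := sub_pos.mpr had
  have h11pos : 0 < a11 := by rw [h11]; positivity
  have h12pos : 0 < a12 := by rw [h12]; positivity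
  have h21neg : a21 < 0 := by
    rw [h21]
    apply div_neg_of_neg_of_pos _ hsub
    nlinarith
  set c : ℝ := a12 * a21 with hc
  have hcneg : c < 0 := mul_neg_of_pos_of_neg h12pos h21neg
  set t : ℕ → ℝ := fun k => a11 - a22 + Dw * Real.pi ^ 2 * (k : ℝ) ^ 2 with ht
  have hpi : 0 < Real.pi := Real.pi_pos
  have htt : Tendsto t atTop atTop := by
    rw [ht]
    apply tendsto_atTop_add_const_left
    apply Tendsto.const_mul_atTop (by positivity : (0:ℝ) < Dw * Real.pi ^ 2)
    exact (tendsto_pow_atTop (two_ne_zero)).comp tendsto_natCast_atTop_atTop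
  set q : ℝ := -2 * c / a11 with hq
  have hq0 : 0 ≤ q := by
    apply div_nonneg _ h11pos.le
    nlinarith
  have haq : a11 * q = -2 * c := by
    rw [hq]; field_simp
  set T0 : ℝ := 1 - 4 * c + q with hT0
  clear_value c q T0 t
  obtain ⟨N, hN⟩ := eventually_atTop.mp (htt.eventually_ge_atTop T0)
  set lam : ℕ → ℝ := fun k => a11 + (Real.sqrt ((t k) ^ 2 + 4 * c) - t k) / 2 with hlam
  clear_value lam
  -- key per-k facts
  have key : ∀ k ≥ N, 0 < lam k ∧
      (a11 - lam k) * (a22 - Dw * Real.pi ^ 2 * (k : ℝ) ^ 2 - lam k) - c = 0 ∧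
      a11 + 2 * c / t k ≤ lam k ∧ lam k ≤ a11 := by
    intro k hk
    have hT : 1 - 4 * c + q ≤ t k := hT0 ▸ hN k hk
    have htk1 : 1 ≤ t k := by linarith
    have htkpos : 0 < t k := lt_of_lt_of_le one_pos htk1
    have htksq : -4 * c ≤ t k ^ 2 := by nlinarith [sq_nonneg (t k - 1)]
    have hΔ : 0 ≤ t k ^ 2 + 4 * c := by linarith
    set s : ℝ := Real.sqrt (t k ^ 2 + 4 * c) with hs
    have hs0 : 0 ≤ s := Real.sqrt_nonneg _
    have hs2 : s ^ 2 = t k ^ 2 + 4 * c := Real.sq_sqrt hΔ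
    have hsup : s ≤ t k := by
      rw [hs]
      have h1 : Real.sqrt (t k ^ 2 + 4 * c) ≤ Real.sqrt (t k ^ 2) :=
        Real.sqrt_le_sqrt (by nlinarith)
      rwa [Real.sqrt_sq htkpos.le] at h1
    clear_value s
    have h4c : 4 * c ≤ 4 * c / t k := by
      rw [le_div_iff₀ htkpos]
      nlinarith
    have hlow0 : 0 ≤ t k + 4 * c / t k := by linarith
    have hslow : t k + 4 * c / t k ≤ s := by
      have hsq : (t k + 4 * c / t k) ^ 2 ≤ t k ^ 2 + 4 * c := by
        have h1 : (t k + 4 * c / t k) ^ 2 = t k ^ 2 + 8 * c + 16 * c ^ 2 / t k ^ 2 := by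
          field_simp; ring
        rw [h1]
        have h2 : 16 * c ^ 2 / t k ^ 2 ≤ -4 * c := by
          rw [div_le_iff₀ (by positivity)]
          nlinarith
        linarith
      calc t k + 4 * c / t k = Real.sqrt ((t k + 4 * c / t k) ^ 2) :=
            (Real.sqrt_sq hlow0).symm
        _ ≤ Real.sqrt (t k ^ 2 + 4 * c) := Real.sqrt_le_sqrt hsq
        _ = s := hs.symm
    have hlamk : lam k = a11 + (s - t k) / 2 := by simp only [hlam]; rw [← hs]
    have hlamlow : a11 + 2 * c / t k ≤ lam k := by
      rw [hlamk]
      have h3 : 2 * c / t k = (t k + 4 * c / t k - t k) / 2 := by field_simp; ring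
      rw [h3]
      linarith
    have hlampos : 0 < lam k := by
      have hma : -a11 < 2 * c / t k := by
        rw [neg_lt, ← neg_div, div_lt_iff₀ htkpos]
        nlinarith [mul_le_mul_of_nonneg_left hT h11pos.le,
          mul_neg_of_pos_of_neg h11pos hcneg]
      linarith
    have hlamup : lam k ≤ a11 := by rw [hlamk]; linarith
    refine ⟨hlampos, ?_, hlamlow, hlamup⟩
    have hB : a22 - Dw * Real.pi ^ 2 * (k : ℝ) ^ 2 = a11 - t k := by
      rw [ht]; ring
    rw [hB, hlamk]
    linear_combination hs2 / 4
  refine ⟨N, lam, fun k hk => ⟨(key k hk).1, (key k hk).2.1⟩, ?_, by rw [← h11]; exact h11pos⟩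
  rw [← h11]
  have hlow : ∀ᶠ k in atTop, a11 + 2 * c / t k ≤ lam k :=
    eventually_atTop.mpr ⟨N, fun k hk => (key k hk).2.2.1⟩
  have hup : ∀ᶠ k in atTop, lam k ≤ a11 :=
    eventually_atTop.mpr ⟨N, fun k hk => (key k hk).2.2.2⟩
  have hl : Tendsto (fun k => a11 + 2 * c / t k) atTop (nhds a11) := by
    have h0 : Tendsto (fun k => 2 * c / t k) atTop (nhds 0) :=
      Tendsto.div_atTop tendsto_const_nhds htt
    simpa using (tendsto_const_nhds (x := a11)).add h0
  exact tendsto_of_tendsto_of_tendsto_of_le_of_le' hl tendsto_const_nhds hlow hup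
end

section
/- Let a11, a12, a21, a22 be real numbers, Dw > 0, k ∈ ℕ, and let λ ∈ ℝ satisfy λ ≠ a22 − Dw·π²·k² and disp(λ, k) = 0. Set ρ := a21/(λ − a22 + Dw·π²·k²), and define u(t,x) := exp(λ·t)·cos(k·π·x) and w(t,x) := ρ·exp(λ·t)·cos(k·π·x). Then for all real t and x: (i) the derivative of s ↦ u(s,x) at s = t equals a11·u(t,x) + a12·w(t,x); (ii) the derivative of s ↦ w(s,x) at s = t equals Dw·(second derivative of y ↦ w(t,y) at y = x) + a21·u(t,x) + a22·w(t,x); (iii) the derivative of y ↦ w(t,y) vanishes at y = 0 and at y = 1 (homogeneous Neumann boundary conditions). Thus e^{λ t}·(cos(kπx), ρ·cos(kπx)) is an exact solution of the linearized reaction–diffusion–ODE system, growing exponentially when λ > 0. -/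
private lemma expDeriv (lam c t : ℝ) :
    HasDerivAt (fun s => Real.exp (lam * s) * c) (lam * Real.exp (lam * t) * c) t := by
  have h := (((hasDerivAt_id t).const_mul lam).exp).mul_const c
  simpa [mul_comm] using h

private lemma cosDeriv (C b : ℝ) :
    deriv (fun y => C * Real.cos (b * y)) = fun y => -(C * b) * Real.sin (b * y) := by
  funext y
  have h : HasDerivAt (fun y => C * Real.cos (b * y)) (-(C * b) * Real.sin (b * y)) y := by
    have : HasDerivAt (fun y => C * Real.cos (b * y)) (C * (-Real.sin (b * y) * (b * 1))) y := ((Real.hasDerivAt_cos (b * y)).comp y ((hasDerivAt_id y).const_mul b)).const_mul C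
    convert this using 1
    ring
  exact h.deriv

private lemma sinDeriv (C b y : ℝ) :
    deriv (fun y => -(C * b) * Real.sin (b * y)) y = -(C * b ^ 2) * Real.cos (b * y) := by
  have h : HasDerivAt (fun y => -(C * b) * Real.sin (b * y)) (-(C * b ^ 2) * Real.cos (b * y)) y := by
    have : HasDerivAt (fun y => -(C * b) * Real.sin (b * y)) (-(C * b) * (Real.cos (b * y) * (b * 1))) y := ((Real.hasDerivAt_sin (b * y)).comp y ((hasDerivAt_id y).const_mul b)).const_mul (-(C * b))
    convert this using 1
    ring
  exact h.deriv

/-- Exact exponential solutions of the linearized system: if `λ` is a root of the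
dispersion relation for mode `k` (with `λ ≠ a22 − Dw·π²·k²`) and
`ρ = a21/(λ − a22 + Dw·π²·k²)`, then `u(t,x) = e^{λt}·cos(kπx)`,
`w(t,x) = ρ·e^{λt}·cos(kπx)` solve `∂ₜu = a11·u + a12·w`,
`∂ₜw = Dw·∂ₓₓw + a21·u + a22·w` with homogeneous Neumann boundary conditions for `w`. -/
theorem stmt_13 (a11 a12 a21 a22 Dw : ℝ) (hDw : 0 < Dw) (k : ℕ) (lam ρ : ℝ)
    (hne : lam ≠ a22 - Dw * Real.pi ^ 2 * (k : ℝ) ^ 2)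
    (hdisp : (a11 - lam) * (a22 - Dw * Real.pi ^ 2 * (k : ℝ) ^ 2 - lam) - a12 * a21 = 0)
    (hρ : ρ = a21 / (lam - a22 + Dw * Real.pi ^ 2 * (k : ℝ) ^ 2))
    (u w : ℝ → ℝ → ℝ)
    (hu : ∀ t x : ℝ, u t x = Real.exp (lam * t) * Real.cos ((k : ℝ) * Real.pi * x))
    (hw : ∀ t x : ℝ, w t x = ρ * Real.exp (lam * t) * Real.cos ((k : ℝ) * Real.pi * x)) :
    ∀ t x : ℝ,
      HasDerivAt (fun s => u s x) (a11 * u t x + a12 * w t x) t ∧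
      HasDerivAt (fun s => w s x)
        (Dw * deriv (deriv (fun y => w t y)) x + a21 * u t x + a22 * w t x) t ∧
      deriv (fun y => w t y) 0 = 0 ∧ deriv (fun y => w t y) 1 = 0 := by
  -- algebraic preliminaries
  set d : ℝ := lam - a22 + Dw * Real.pi ^ 2 * (k : ℝ) ^ 2 with hd
  have hdne : d ≠ 0 := by
    intro h
    apply hne
    have : lam = a22 - Dw * Real.pi ^ 2 * (k : ℝ) ^ 2 := by linarith [hd ▸ h]
    exact this
  have hρd : ρ * d = a21 := by
    rw [hρ]; field_simp
  have hlam : lam = a11 + a12 * ρ := by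
    have h1 : (a11 - lam) * d = -(a12 * a21) := by
      have : a22 - Dw * Real.pi ^ 2 * (k : ℝ) ^ 2 - lam = -d := by rw [hd]; ring
      rw [this] at hdisp; nlinarith [hdisp]
    -- a12 * ρ * d = a12 * a21 = -(a11-lam)*d
    have h2 : (a12 * ρ) * d = a12 * a21 := by rw [mul_assoc, hρd]
    have h3 : (lam - a11 - a12 * ρ) * d = 0 := by nlinarith [h1, h2]
    have := mul_eq_zero.mp h3
    rcases this with h | h
    · linarith
    · exact absurd h hdne
  intro t x
  set b : ℝ := (k : ℝ) * Real.pi with hb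
  have hwfun : (fun y => w t y) = fun y => (ρ * Real.exp (lam * t)) * Real.cos (b * y) := by
    funext y; rw [hw]
  have hderiv1 : deriv (fun y => w t y) = fun y => -((ρ * Real.exp (lam * t)) * b) * Real.sin (b * y) := by
    rw [hwfun, cosDeriv]
  have hderiv2 : deriv (deriv (fun y => w t y)) x = -((ρ * Real.exp (lam * t)) * b ^ 2) * Real.cos (b * x) := by
    rw [hderiv1, sinDeriv]
  refine ⟨?_, ?_, ?_, ?_⟩
  · -- time derivative of u
    have h : HasDerivAt (fun s => u s x) (lam * Real.exp (lam * t) * Real.cos (b * x)) t := by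
      have hfun : (fun s => u s x) = fun s => Real.exp (lam * s) * Real.cos (b * x) := by
        funext s; rw [hu]
      rw [hfun]; exact expDeriv lam _ t
    convert h using 1
    rw [hu, hw, hlam]; ring
  · -- time derivative of w
    have h : HasDerivAt (fun s => w s x) (lam * (ρ * Real.exp (lam * t)) * Real.cos (b * x)) t := by
      have hfun : (fun s => w s x) = fun s => Real.exp (lam * s) * (ρ * Real.cos (b * x)) := by
        funext s; rw [hw]; ring
      rw [hfun]
      have := expDeriv lam (ρ * Real.cos (b * x)) t
      convert this using 1; ring
    convert h using 1
    rw [hderiv2, hu, hw]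
    have hDb : Dw * b ^ 2 = d - lam + a22 := by rw [hb, hd]; ring
    have hc : Dw * (-(ρ * b ^ 2)) + a21 + a22 * ρ = lam * ρ := by linear_combination (-1) * hρd + (-ρ) * hDb
    linear_combination (Real.exp (lam * t) * Real.cos (b * x)) * hc
  · rw [hderiv1]; simp
  · rw [hderiv1]
    have hs : Real.sin (b * 1) = 0 := by
      rw [mul_one, hb]; exact Real.sin_nat_mul_pi k
    simp only [hs, mul_zero]
end

section
/- Let u, w : ℝ → ℝ be functions such that for every t ≥ 0, u is differentiable at t with derivative (a1·u(t)·w(t)/(1 + u(t)·w(t)) − d1)·u(t) and w is differentiable at t with derivative −w(t) − u(t)²·w(t) + κ1. If u(0) > 0 and w(0) > 0, then u(t) > 0 and w(t) > 0 for every t ≥ 0; i.e., solutions of the kinetic system with positive initial conditions remain positive for all time. -/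
/-- Positivity of solutions of the kinetic system: solutions of
`u' = (a1·u·w/(1+u·w) − d1)·u`, `w' = −w − u²·w + κ1` with positive initial conditions
remain positive for all `t ≥ 0`. -/
theorem stmt_14 (a1 d1 κ1 : ℝ) (ha1 : 0 < a1) (hd1 : 0 < d1) (hκ1 : 0 < κ1)
    (u w : ℝ → ℝ)
    (hu : ∀ t : ℝ, 0 ≤ t →
      HasDerivAt u ((a1 * u t * w t / (1 + u t * w t) - d1) * u t) t)
    (hw : ∀ t : ℝ, 0 ≤ t →
      HasDerivAt w (-w t - (u t) ^ 2 * w t + κ1) t)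
    (hu0 : 0 < u 0) (hw0 : 0 < w 0) :
    ∀ t : ℝ, 0 ≤ t → 0 < u t ∧ 0 < w t := by
  by_contra hcon
  push_neg at hcon
  obtain ⟨t0, ht0, ht0'⟩ := hcon
  set S : Set ℝ := {t : ℝ | 0 ≤ t ∧ (u t ≤ 0 ∨ w t ≤ 0)} with hS
  have hSne : S.Nonempty := by
    refine ⟨t0, ht0, ?_⟩
    rcases le_or_gt (u t0) 0 with h | h
    · exact Or.inl h
    · exact Or.inr (ht0' h)
  have hSbdd : BddBelow S := ⟨0, fun t ht => ht.1⟩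
  set τ : ℝ := sInf S with hτ
  have hτ0 : 0 ≤ τ := le_csInf hSne (fun t ht => ht.1)
  -- before τ everything is positive
  have hpos : ∀ s, 0 ≤ s → s < τ → 0 < u s ∧ 0 < w s := by
    intro s hs hsτ
    by_contra h
    push_neg at h
    have hsS : s ∈ S := by
      refine ⟨hs, ?_⟩
      rcases le_or_gt (u s) 0 with h' | h'
      · exact Or.inl h'
      · exact Or.inr (le_of_not_gt (fun h'' => absurd (h h') (not_le.mpr h'')))
    exact absurd (csInf_le hSbdd hsS) (not_le.mpr hsτ)
  -- at τ, u τ ≤ 0 or w τ ≤ 0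
  have hmem : u τ ≤ 0 ∨ w τ ≤ 0 := by
    by_contra h
    push_neg at h
    have hcu : ContinuousAt u τ := (hu τ hτ0).continuousAt
    have hcw : ContinuousAt w τ := (hw τ hτ0).continuousAt
    have hev : ∀ᶠ x in nhds τ, 0 < u x ∧ 0 < w x :=
      (hcu.tendsto.eventually (eventually_gt_nhds h.1)).and
        (hcw.tendsto.eventually (eventually_gt_nhds h.2))
    obtain ⟨ε, hε, hball⟩ := Metric.eventually_nhds_iff.mp hev
    have hlt : sInf S < τ + ε := by linarith [hτ.symm]
    obtain ⟨s, hsS, hsε⟩ := (csInf_lt_iff hSbdd hSne).mp hlt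
    have hτs : τ ≤ s := csInf_le hSbdd hsS
    have : dist s τ < ε := by
      rw [Real.dist_eq, abs_of_nonneg (by linarith)]
      linarith
    have hposs := hball this
    rcases hsS.2 with h' | h'
    · linarith [hposs.1]
    · linarith [hposs.2]
  -- τ > 0
  have hτpos : 0 < τ := by
    rcases lt_or_eq_of_le hτ0 with h | h
    · exact h
    · exfalso; rcases hmem with h' | h' <;> rw [← h] at h' <;> linarith
  -- nonnegativity at τ by left continuity
  have hIoo : Set.Ioo (0:ℝ) τ ∈ nhdsWithin τ (Set.Iio τ) :=
    Ioo_mem_nhdsLT_of_mem ⟨hτpos, le_refl τ⟩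
  have huτ : 0 ≤ u τ := by
    refine ge_of_tendsto ((hu τ hτ0).continuousAt.continuousWithinAt.tendsto
      (s := Set.Iio τ)) ?_
    filter_upwards [hIoo] with s hs
    exact (hpos s hs.1.le hs.2).1.le
  have hwτ : 0 ≤ w τ := by
    refine ge_of_tendsto ((hw τ hτ0).continuousAt.continuousWithinAt.tendsto
      (s := Set.Iio τ)) ?_
    filter_upwards [hIoo] with s hs
    exact (hpos s hs.1.le hs.2).2.le
  rcases hmem with hcase | hcase
  · -- u τ = 0 : Grönwall / monotonicity argument
    have huτ0 : u τ = 0 := le_antisymm hcase huτ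
    set g : ℝ → ℝ := fun t => u t * Real.exp (d1 * t) with hg
    have hgd : ∀ x, 0 ≤ x → HasDerivAt g
        ((a1 * u x * w x / (1 + u x * w x) - d1) * u x * Real.exp (d1 * x)
          + u x * (Real.exp (d1 * x) * d1)) x := by
      intro x hx
      have hexp : HasDerivAt (fun t => Real.exp (d1 * t)) (Real.exp (d1 * x) * d1) x := by
        have h1 : HasDerivAt (fun t : ℝ => d1 * t) d1 x := by
          simpa using (hasDerivAt_id x).const_mul d1
        exact (Real.hasDerivAt_exp (d1 * x)).comp x h1
      exact (hu x hx).mul hexp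
    have hmono : MonotoneOn g (Set.Icc 0 τ) := by
      apply monotoneOn_of_deriv_nonneg (convex_Icc 0 τ)
      · exact fun x hx =>
          ((hu x hx.1).continuousAt.continuousWithinAt.mul
            ((Real.continuous_exp.comp (continuous_const.mul continuous_id)).continuousWithinAt))
      · intro x hx
        rw [interior_Icc] at hx
        exact (hgd x hx.1.le).differentiableAt.differentiableWithinAt
      · intro x hx
        rw [interior_Icc] at hx
        obtain ⟨hux, hwx⟩ := hpos x hx.1.le hx.2
        rw [(hgd x hx.1.le).deriv]
        have hden : 0 < 1 + u x * w x := by positivity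
        have hf : 0 ≤ a1 * u x * w x / (1 + u x * w x) := by positivity
        have hE : 0 < Real.exp (d1 * x) := Real.exp_pos _
        have key : (a1 * u x * w x / (1 + u x * w x) - d1) * u x * Real.exp (d1 * x)
            + u x * (Real.exp (d1 * x) * d1)
            = u x * Real.exp (d1 * x) * (a1 * u x * w x / (1 + u x * w x)) := by ring
        rw [key]
        positivity
    have h01 : (0:ℝ) ∈ Set.Icc (0:ℝ) τ := ⟨le_refl 0, hτpos.le⟩
    have hτ1 : τ ∈ Set.Icc (0:ℝ) τ := ⟨hτpos.le, le_refl τ⟩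
    have := hmono h01 hτ1 hτpos.le
    simp only [hg, huτ0, mul_zero, Real.exp_zero, mul_one, zero_mul] at this
    linarith
  · -- w τ = 0 : derivative κ1 > 0 at τ gives contradiction on the left
    have hwτ0 : w τ = 0 := le_antisymm hcase hwτ
    have hd : HasDerivAt w κ1 τ := by
      have := hw τ hτ0
      rwa [hwτ0, mul_zero, neg_zero, zero_sub, neg_zero, zero_add] at this
    rw [hasDerivAt_iff_tendsto_slope] at hd
    have hev : ∀ᶠ s in nhdsWithin τ {τ}ᶜ, 0 < slope w τ s :=
      hd.eventually (eventually_gt_nhds hκ1)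
    have hev' : ∀ᶠ s in nhdsWithin τ (Set.Iio τ), 0 < slope w τ s :=
      hev.filter_mono (nhdsWithin_mono τ (fun x hx => ne_of_lt hx))
    obtain ⟨s, hs1, hs2⟩ := (hev'.and (Filter.eventually_of_mem hIoo (fun x hx => hx))).exists
    rw [slope_def_field, hwτ0, sub_zero] at hs1
    have hsτ : s - τ < 0 := by linarith [hs2.2]
    have hws : w s < 0 := by
      by_contra h
      push_neg at h
      have : w s / (s - τ) ≤ 0 := div_nonpos_of_nonneg_of_nonpos h hsτ.le
      linarith
    linarith [(hpos s hs2.1.le hs2.2).2]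
end

section
/- Let u, w : ℝ → ℝ be functions such that for every t ≥ 0, u is differentiable at t with derivative (a1·u(t)·w(t)/(1 + u(t)·w(t)) − d1)·u(t) and w is differentiable at t with derivative −w(t) − u(t)²·w(t) + κ1, and assume u(0) > 0 and w(0) > 0. Then for every ε > 0 there exists T ≥ 0 such that for all t ≥ T: w(t) ≤ κ1 + ε, (1/a1)·u(t) + w(t) ≤ κ1/min(d1,1) + ε, and u(t) ≤ (a1/min(d1,1))·κ1 + ε. In other words, limsup_{t→∞} w(t) ≤ κ1, limsup_{t→∞} ((1/a1)·u(t) + w(t)) ≤ κ1/min(d1,1), and limsup_{t→∞} u(t) ≤ a1·κ1/min(d1,1); in particular the solution of the kinetic system is uniformly bounded in time. -/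
set_option maxHeartbeats 1600000


/-- Uniform boundedness of the kinetic system: for solutions with positive initial data,
`limsup_{t→∞} w(t) ≤ κ1`, `limsup_{t→∞} ((1/a1)·u(t) + w(t)) ≤ κ1/min(d1,1)` and
`limsup_{t→∞} u(t) ≤ (a1/min(d1,1))·κ1`. -/
theorem stmt_15 (a1 d1 κ1 : ℝ) (ha1 : 0 < a1) (hd1 : 0 < d1) (hκ1 : 0 < κ1)
    (u w : ℝ → ℝ)
    (hu : ∀ t : ℝ, 0 ≤ t →
      HasDerivAt u ((a1 * u t * w t / (1 + u t * w t) - d1) * u t) t)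
    (hw : ∀ t : ℝ, 0 ≤ t →
      HasDerivAt w (-w t - (u t) ^ 2 * w t + κ1) t)
    (hu0 : 0 < u 0) (hw0 : 0 < w 0) :
    ∀ ε : ℝ, 0 < ε → ∃ T : ℝ, 0 ≤ T ∧ ∀ t : ℝ, T ≤ t →
      w t ≤ κ1 + ε ∧
      (1 / a1) * u t + w t ≤ κ1 / min d1 1 + ε ∧
      u t ≤ (a1 / min d1 1) * κ1 + ε := by
  intro ε hε
  set m : ℝ := min d1 1 with hm_def
  have hm : 0 < m := lt_min hd1 one_pos
  have hm1 : m ≤ 1 := min_le_right _ _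
  have hmd : m ≤ d1 := min_le_left _ _
  have hwcont : ∀ t : ℝ, 0 ≤ t → ContinuousAt w t := fun t ht => (hw t ht).continuousAt
  have hucont : ∀ t : ℝ, 0 ≤ t → ContinuousAt u t := fun t ht => (hu t ht).continuousAt
  -- Positivity of w
  have hwpos : ∀ t : ℝ, 0 ≤ t → 0 < w t := by
    by_contra hcon
    push_neg at hcon
    obtain ⟨t1, ht1, hwt1⟩ := hcon
    set S : Set ℝ := {t | 0 ≤ t ∧ w t ≤ 0} with hS
    have hne : S.Nonempty := ⟨t1, ht1, hwt1⟩
    have hbdd : BddBelow S := ⟨0, fun x hx => hx.1⟩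
    set t0 := sInf S with ht0def
    have ht0ge : 0 ≤ t0 := le_csInf hne (fun x hx => hx.1)
    have ht0w : w t0 ≤ 0 := by
      by_contra hpos
      push_neg at hpos
      have hev : ∀ᶠ x in nhds t0, 0 < w x :=
        (hwcont t0 ht0ge).eventually (eventually_gt_nhds hpos)
      obtain ⟨δ, hδ, hball⟩ := Metric.eventually_nhds_iff.mp hev
      obtain ⟨s, hsS, hslt⟩ := (csInf_lt_iff hbdd hne).mp (show sInf S < t0 + δ by linarith)
      have hst0 : t0 ≤ s := csInf_le hbdd hsS
      have : 0 < w s := hball (by rw [Real.dist_eq, abs_lt]; constructor <;> linarith)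
      linarith [hsS.2]
    have ht0pos : 0 < t0 := by
      rcases ht0ge.lt_or_eq with h | h
      · exact h
      · exfalso; rw [← h] at ht0w; linarith
    have hlt : ∀ s, 0 ≤ s → s < t0 → 0 < w s := by
      intro s hs hst
      by_contra hns
      push_neg at hns
      have : t0 ≤ s := csInf_le hbdd ⟨hs, hns⟩
      linarith
    have hd : HasDerivAt w (-w t0 - (u t0) ^ 2 * w t0 + κ1) t0 := hw t0 ht0ge
    have hdpos : 0 < -w t0 - (u t0) ^ 2 * w t0 + κ1 := by nlinarith [sq_nonneg (u t0)]
    rw [hasDerivAt_iff_tendsto_slope] at hd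
    have hev2 : ∀ᶠ x in nhdsWithin t0 {t0}ᶜ, 0 < slope w t0 x :=
      hd.eventually (eventually_gt_nhds hdpos)
    have hsub : Set.Iio t0 ⊆ {t0}ᶜ := fun x hx => ne_of_lt hx
    have hev3 : ∀ᶠ x in nhdsWithin t0 (Set.Iio t0), 0 < slope w t0 x :=
      hev2.filter_mono (nhdsWithin_mono t0 hsub)
    have hev4 : ∀ᶠ x in nhdsWithin t0 (Set.Iio t0), x ∈ Set.Ioo 0 t0 :=
      Ioo_mem_nhdsLT_of_mem ⟨ht0pos, le_refl t0⟩
    obtain ⟨x, hx1, hx2⟩ := (hev3.and hev4).exists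
    have hxlt : x < t0 := hx2.2
    have hxw : 0 < w x := hlt x hx2.1.le hxlt
    rw [slope_def_field] at hx1
    rcases div_pos_iff.mp hx1 with ⟨hnum, hden⟩ | ⟨hnum, hden⟩
    · linarith
    · linarith
  -- Positivity of u
  have hupos : ∀ t : ℝ, 0 ≤ t → 0 < u t := by
    by_contra hcon
    push_neg at hcon
    obtain ⟨t1, ht1, hut1⟩ := hcon
    set S : Set ℝ := {t | 0 ≤ t ∧ u t ≤ 0} with hS
    have hne : S.Nonempty := ⟨t1, ht1, hut1⟩
    have hbdd : BddBelow S := ⟨0, fun x hx => hx.1⟩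
    set t0 := sInf S with ht0def
    have ht0ge : 0 ≤ t0 := le_csInf hne (fun x hx => hx.1)
    have ht0u : u t0 ≤ 0 := by
      by_contra hpos
      push_neg at hpos
      have hev : ∀ᶠ x in nhds t0, 0 < u x :=
        (hucont t0 ht0ge).eventually (eventually_gt_nhds hpos)
      obtain ⟨δ, hδ, hball⟩ := Metric.eventually_nhds_iff.mp hev
      obtain ⟨s, hsS, hslt⟩ := (csInf_lt_iff hbdd hne).mp (show sInf S < t0 + δ by linarith)
      have hst0 : t0 ≤ s := csInf_le hbdd hsS
      have : 0 < u s := hball (by rw [Real.dist_eq, abs_lt]; constructor <;> linarith)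
      linarith [hsS.2]
    have ht0pos : 0 < t0 := by
      rcases ht0ge.lt_or_eq with h | h
      · exact h
      · exfalso; rw [← h] at ht0u; linarith
    have hlt : ∀ s, 0 ≤ s → s < t0 → 0 < u s := by
      intro s hs hst
      by_contra hns
      push_neg at hns
      have : t0 ≤ s := csInf_le hbdd ⟨hs, hns⟩
      linarith
    set φ : ℝ → ℝ := fun t => u t * Real.exp (d1 * t) with hφdef
    have hφd : ∀ x ∈ Set.Icc (0:ℝ) t0, HasDerivAt φ
        ((a1 * u x * w x / (1 + u x * w x) - d1) * u x * Real.exp (d1 * x)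
          + u x * (Real.exp (d1 * x) * (d1 * 1))) x := by
      intro x hx
      have hid : HasDerivAt (fun t : ℝ => d1 * t) (d1 * 1) x := (hasDerivAt_id x).const_mul d1
      exact (hu x hx.1).mul hid.exp
    have hmono : MonotoneOn φ (Set.Icc 0 t0) := by
      apply monotoneOn_of_deriv_nonneg (convex_Icc 0 t0)
      · intro x hx; exact (hφd x hx).continuousAt.continuousWithinAt
      · intro x hx
        rw [interior_Icc] at hx
        exact (hφd x ⟨hx.1.le, hx.2.le⟩).differentiableAt.differentiableWithinAt
      · intro x hx
        rw [interior_Icc] at hx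
        rw [(hφd x ⟨hx.1.le, hx.2.le⟩).deriv]
        have hux : 0 < u x := hlt x hx.1.le hx.2
        have hwx : 0 < w x := hwpos x hx.1.le
        have h1 : (0:ℝ) < 1 + u x * w x := by nlinarith
        have h2 : 0 ≤ a1 * u x * w x / (1 + u x * w x) :=
          div_nonneg (mul_nonneg (mul_nonneg ha1.le hux.le) hwx.le) h1.le
        have heq : (a1 * u x * w x / (1 + u x * w x) - d1) * u x * Real.exp (d1 * x)
            + u x * (Real.exp (d1 * x) * (d1 * 1))
            = (a1 * u x * w x / (1 + u x * w x)) * u x * Real.exp (d1 * x) := by ring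
        rw [heq]
        exact mul_nonneg (mul_nonneg h2 hux.le) (Real.exp_nonneg _)
    have h01 := hmono (Set.left_mem_Icc.2 ht0ge) (Set.right_mem_Icc.2 ht0ge) ht0ge
    have hφ0 : φ 0 = u 0 := by simp [hφdef]
    have hφt0 : φ t0 ≤ 0 := mul_nonpos_of_nonpos_of_nonneg ht0u (Real.exp_nonneg _)
    rw [hφ0] at h01
    linarith
  -- decay of w
  have hwle : ∀ t : ℝ, 0 ≤ t → w t ≤ κ1 + (w 0 - κ1) * Real.exp (-t) := by
    set Φ : ℝ → ℝ := fun t => (w t - κ1) * Real.exp t with hΦdef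
    have hΦd : ∀ x : ℝ, 0 ≤ x → HasDerivAt Φ
        ((-w x - (u x) ^ 2 * w x + κ1) * Real.exp x + (w x - κ1) * Real.exp x) x :=
      fun x hx => ((hw x hx).sub_const κ1).mul (Real.hasDerivAt_exp x)
    have hanti : AntitoneOn Φ (Set.Ici 0) := by
      apply antitoneOn_of_deriv_nonpos (convex_Ici 0)
      · intro x hx; exact (hΦd x hx).continuousAt.continuousWithinAt
      · intro x hx
        rw [interior_Ici] at hx
        exact (hΦd x hx.le).differentiableAt.differentiableWithinAt
      · intro x hx
        rw [interior_Ici] at hx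
        rw [(hΦd x hx.le).deriv]
        have hwx := hwpos x hx.le
        have heq : (-w x - (u x) ^ 2 * w x + κ1) * Real.exp x + (w x - κ1) * Real.exp x
            = (-(u x) ^ 2 * w x) * Real.exp x := by ring
        rw [heq]
        apply mul_nonpos_of_nonpos_of_nonneg _ (Real.exp_nonneg _)
        nlinarith [sq_nonneg (u x)]
    intro t ht
    have h := hanti Set.self_mem_Ici (Set.mem_Ici.2 ht) ht
    have h2 : (w t - κ1) * Real.exp t * Real.exp (-t)
        ≤ (w 0 - κ1) * Real.exp 0 * Real.exp (-t) :=
      mul_le_mul_of_nonneg_right h (Real.exp_nonneg (-t))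
    rw [mul_assoc, ← Real.exp_add, add_neg_cancel, Real.exp_zero, mul_one, mul_one] at h2
    linarith
  -- decay of V = (1/a1) u + w
  have hVle : ∀ t : ℝ, 0 ≤ t → (1/a1) * u t + w t
      ≤ κ1/m + ((1/a1) * u 0 + w 0 - κ1/m) * Real.exp (-(m*t)) := by
    set Φ : ℝ → ℝ := fun t => ((1/a1) * u t + w t - κ1/m) * Real.exp (m*t) with hΦdef
    have hΦd : ∀ x : ℝ, 0 ≤ x → HasDerivAt Φ
        (((1/a1) * ((a1 * u x * w x / (1 + u x * w x) - d1) * u x)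
            + (-w x - (u x) ^ 2 * w x + κ1)) * Real.exp (m*x)
          + ((1/a1) * u x + w x - κ1/m) * (Real.exp (m*x) * (m * 1))) x := by
      intro x hx
      have hid : HasDerivAt (fun t : ℝ => m * t) (m * 1) x := (hasDerivAt_id x).const_mul m
      exact ((((hu x hx).const_mul (1/a1)).add (hw x hx)).sub_const (κ1/m)).mul hid.exp
    have hanti : AntitoneOn Φ (Set.Ici 0) := by
      apply antitoneOn_of_deriv_nonpos (convex_Ici 0)
      · intro x hx; exact (hΦd x hx).continuousAt.continuousWithinAt
      · intro x hx
        rw [interior_Ici] at hx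
        exact (hΦd x hx.le).differentiableAt.differentiableWithinAt
      · intro x hx
        rw [interior_Ici] at hx
        rw [(hΦd x hx.le).deriv]
        have hux : 0 < u x := hupos x hx.le
        have hwx : 0 < w x := hwpos x hx.le
        have h1 : (0:ℝ) < 1 + u x * w x := by nlinarith
        set D : ℝ := a1 * u x * w x / (1 + u x * w x) with hDdef
        have hD0 : 0 ≤ D :=
          div_nonneg (mul_nonneg (mul_nonneg ha1.le hux.le) hwx.le) h1.le
        have hDle : D ≤ a1 * u x * w x :=
          div_le_self (mul_nonneg (mul_nonneg ha1.le hux.le) hwx.le)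
            (by nlinarith [mul_pos hux hwx])
        have hA : (1/a1) * ((D - d1) * u x) + (-w x - (u x) ^ 2 * w x + κ1)
            + ((1/a1) * u x + w x - κ1/m) * m ≤ 0 := by
          have hh1 : (1/a1) * (D * u x) ≤ (1/a1) * (a1 * u x * w x * u x) :=
            mul_le_mul_of_nonneg_left (mul_le_mul_of_nonneg_right hDle hux.le)
              (by positivity)
          have hh2 : (1/a1) * (a1 * u x * w x * u x) = (u x) ^ 2 * w x := by
            field_simp
          have hh3 : 0 ≤ (1/a1) * (d1 - m) * u x := by
            apply mul_nonneg (mul_nonneg (by positivity) (by linarith)) hux.le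
          have hh4 : 0 ≤ (1 - m) * w x := mul_nonneg (by linarith) hwx.le
          have hκm : κ1/m * m = κ1 := div_mul_cancel₀ κ1 hm.ne'
          nlinarith [hh1, hh2, hh3, hh4, hκm]
        have heq : ((1/a1) * ((D - d1) * u x) + (-w x - (u x) ^ 2 * w x + κ1)) * Real.exp (m*x)
            + ((1/a1) * u x + w x - κ1/m) * (Real.exp (m*x) * (m * 1))
            = ((1/a1) * ((D - d1) * u x) + (-w x - (u x) ^ 2 * w x + κ1)
              + ((1/a1) * u x + w x - κ1/m) * m) * Real.exp (m*x) := by ring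
        rw [heq]
        exact mul_nonpos_of_nonpos_of_nonneg hA (Real.exp_nonneg _)
    intro t ht
    have h := hanti Set.self_mem_Ici (Set.mem_Ici.2 ht) ht
    have h2 : ((1/a1) * u t + w t - κ1/m) * Real.exp (m*t) * Real.exp (-(m*t))
        ≤ ((1/a1) * u 0 + w 0 - κ1/m) * Real.exp (m*0) * Real.exp (-(m*t)) :=
      mul_le_mul_of_nonneg_right h (Real.exp_nonneg _)
    rw [mul_assoc, ← Real.exp_add, add_neg_cancel, Real.exp_zero, mul_one,
      mul_zero, Real.exp_zero, mul_one] at h2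
    linarith
  -- choose T
  set C1 : ℝ := max (w 0 - κ1) 0 with hC1def
  set C2 : ℝ := max ((1/a1) * u 0 + w 0 - κ1/m) 0 with hC2def
  set C : ℝ := C1 + (1 + a1) * C2 with hCdef
  have hC1 : 0 ≤ C1 := le_max_right _ _
  have hC2 : 0 ≤ C2 := le_max_right _ _
  have hC1ge : w 0 - κ1 ≤ C1 := le_max_left _ _
  have hC2ge : (1/a1) * u 0 + w 0 - κ1/m ≤ C2 := le_max_left _ _
  have hC : 0 ≤ C := by nlinarith
  clear_value C1 C2 C
  refine ⟨max 0 (Real.log (C/ε) / m), le_max_left _ _, fun t ht => ?_⟩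
  have ht0 : 0 ≤ t := le_trans (le_max_left _ _) ht
  have htail : C * Real.exp (-(m*t)) ≤ ε := by
    rcases hC.lt_or_eq with h | h
    · have hlog : Real.log (C/ε) / m ≤ t := le_trans (le_max_right _ _) ht
      have h1 : Real.log (C/ε) ≤ m * t := by
        rw [div_le_iff₀ hm] at hlog; linarith
      have h2 : Real.exp (-(m*t)) ≤ ε / C := by
        calc Real.exp (-(m*t)) ≤ Real.exp (-(Real.log (C/ε))) :=
              Real.exp_le_exp.2 (by linarith)
          _ = (C/ε)⁻¹ := by rw [Real.exp_neg, Real.exp_log (by positivity)]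
          _ = ε / C := inv_div _ _
      calc C * Real.exp (-(m*t)) ≤ C * (ε / C) :=
            mul_le_mul_of_nonneg_left h2 h.le
        _ = ε := by field_simp
    · rw [← h]; simp; linarith
  have hexp_le : Real.exp (-t) ≤ Real.exp (-(m*t)) := by
    apply Real.exp_le_exp.2
    nlinarith
  have hE : 0 < Real.exp (-(m*t)) := Real.exp_pos _
  have hE' : 0 ≤ Real.exp (-t) := Real.exp_nonneg _
  -- bound on w
  have hb1 : w t ≤ κ1 + ε := by
    have h1 := hwle t ht0
    have h2 : (w 0 - κ1) * Real.exp (-t) ≤ C1 * Real.exp (-(m*t)) := by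
      apply mul_le_mul hC1ge hexp_le hE' hC1
    have h3 : C1 * Real.exp (-(m*t)) ≤ C * Real.exp (-(m*t)) := by
      apply mul_le_mul_of_nonneg_right _ hE.le
      nlinarith
    linarith
  have hVt := hVle t ht0
  have hb2 : (1/a1) * u t + w t ≤ κ1/m + ε := by
    have h2 : ((1/a1) * u 0 + w 0 - κ1/m) * Real.exp (-(m*t)) ≤ C * Real.exp (-(m*t)) := by
      apply mul_le_mul_of_nonneg_right _ hE.le
      nlinarith [hC2ge]
    calc (1/a1) * u t + w t
        ≤ κ1/m + ((1/a1) * u 0 + w 0 - κ1/m) * Real.exp (-(m*t)) := hVt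
      _ ≤ κ1/m + C * Real.exp (-(m*t)) := by linarith [h2]
      _ ≤ κ1/m + ε := by linarith [htail]
  have hb3 : u t ≤ a1 / m * κ1 + ε := by
    have hwt : 0 ≤ w t := (hwpos t ht0).le
    have key : (1/a1) * u t + w t ≤ κ1/m + C2 * Real.exp (-(m*t)) := by
      have h2 : ((1/a1) * u 0 + w 0 - κ1/m) * Real.exp (-(m*t)) ≤ C2 * Real.exp (-(m*t)) :=
        mul_le_mul_of_nonneg_right hC2ge hE.le
      linarith [hVt]
    have key2 : u t ≤ a1 * (κ1/m) + a1 * (C2 * Real.exp (-(m*t))) := by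
      have h3 := mul_le_mul_of_nonneg_left key ha1.le
      have hinv : a1 * (1/a1) = 1 := by field_simp
      have h4 : a1 * ((1/a1) * u t + w t) = u t + a1 * w t := by
        linear_combination u t * hinv
      have h8 : a1 * (κ1/m + C2 * Real.exp (-(m*t)))
          = a1 * (κ1/m) + a1 * (C2 * Real.exp (-(m*t))) := by ring
      linarith [h3, h4, h8, mul_nonneg ha1.le hwt]
    have h5 : a1 * (C2 * Real.exp (-(m*t))) ≤ C * Real.exp (-(m*t)) := by
      have h6 : a1 * C2 ≤ C := by nlinarith
      have := mul_le_mul_of_nonneg_right h6 hE.le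
      linarith [this]
    have h7 : a1 * (κ1/m) = a1 / m * κ1 := by ring
    linarith
  exact ⟨hb1, hb2, hb3⟩
end

section
/- Let Dw > 0 and let u, w : ℝ → ℝ → ℝ (first argument time, second argument space). Assume: (a) for every t ≥ 0 and every x ∈ [0,1], the map s ↦ w(s,x) is differentiable at t with derivative ∂ₜw(t,x) = Dw·(second derivative of y ↦ w(t,y) at y = x) − w(t,x) − u(t,x)²·w(t,x) + κ1; (b) for every t ≥ 0 the map x ↦ w(t,x) is twice continuously differentiable on [0,1] and its derivative vanishes at x = 0 and x = 1 (homogeneous Neumann boundary conditions); (c) (t,x) ↦ w(t,x) and (t,x) ↦ ∂ₜw(t,x) are continuous on [0,∞) × [0,1]; (d) w(t,x) ≥ 0 for all t ≥ 0 and x ∈ [0,1]. Then for every ε > 0 there exists T ≥ 0 such that ∫₀¹ w(t,x) dx ≤ κ1 + ε for all t ≥ T; i.e., limsup_{t→∞} ‖w(t,·)‖_{L¹(0,1)} ≤ κ1. -/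
open Set Filter Topology

lemma aux_deriv_nonneg_left {F : ℝ → ℝ} {d a t₀ : ℝ} (h : HasDerivAt F d a)
    (hlt : t₀ < a) (hF : ∀ s, t₀ ≤ s → s < a → F s ≤ F a) : 0 ≤ d := by
  have hs : Tendsto (slope F a) (𝓝[≠] a) (𝓝 d) := hasDerivAt_iff_tendsto_slope.1 h
  have h2 : Tendsto (slope F a) (𝓝[Iio a] a) (𝓝 d) :=
    hs.mono_left (nhdsWithin_mono _ fun y hy => ne_of_lt hy)
  refine ge_of_tendsto h2 ?_
  filter_upwards [Ioo_mem_nhdsLT_of_mem ⟨hlt, le_refl a⟩] with y hy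
  have h1 : F y - F a ≤ 0 := sub_nonpos.2 (hF y hy.1.le hy.2)
  have h2' : y - a < 0 := sub_neg.2 hy.2
  rw [slope_def_field]
  exact div_nonneg_iff.2 (Or.inr ⟨h1, h2'.le⟩)

/-- Second derivative test at a maximum over `[0,1]`, with Neumann boundary conditions,
robust to junk values of `deriv` at the endpoints. -/
lemma aux_second_deriv_nonpos (f : ℝ → ℝ)
    (hf : ContDiffOn ℝ 2 f (Icc 0 1))
    (hb0 : deriv f 0 = 0) (hb1 : deriv f 1 = 0)
    {x : ℝ} (hx : x ∈ Icc (0:ℝ) 1)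
    (hmax : ∀ y ∈ Icc (0:ℝ) 1, f y ≤ f x) :
    deriv (deriv f) x ≤ 0 := by
  set s : Set ℝ := Icc 0 1 with hs_def
  have hs : UniqueDiffOn ℝ s := uniqueDiffOn_Icc (by norm_num)
  set g : ℝ → ℝ := derivWithin f s with hg_def
  set G : ℝ → ℝ := derivWithin g s with hG_def
  have hg : ContDiffOn ℝ 1 g s := hf.derivWithin hs (by norm_num)
  have hgc : ContinuousOn g s := hg.continuousOn
  have hGc : ContinuousOn G s := hg.continuousOn_derivWithin hs (le_refl _)
  have hfd : DifferentiableOn ℝ f s := hf.differentiableOn (by norm_num)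
  have hgd : DifferentiableOn ℝ g s := hg.differentiableOn (by norm_num)
  have hIoo : ∀ y ∈ Ioo (0:ℝ) 1, deriv f y = g y := by
    intro y hy
    exact (derivWithin_of_mem_nhds (Icc_mem_nhds hy.1 hy.2)).symm
  have hIoo2 : ∀ y ∈ Ioo (0:ℝ) 1, deriv g y = G y := by
    intro y hy
    exact (derivWithin_of_mem_nhds (Icc_mem_nhds hy.1 hy.2)).symm
  have hIoo3 : ∀ y ∈ Ioo (0:ℝ) 1, deriv (deriv f) y = G y := by
    intro y hy
    have heq : deriv f =ᶠ[𝓝 y] g :=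
      eventuallyEq_of_mem (Ioo_mem_nhds hy.1 hy.2) (fun z hz => hIoo z hz)
    rw [heq.deriv_eq]; exact hIoo2 y hy
  rcases eq_or_lt_of_le hx.1 with h0 | h0
  · -- x = 0
    subst h0
    by_contra hpos
    push_neg at hpos
    have hdiff0 : DifferentiableAt ℝ (deriv f) 0 := by
      by_contra hnd
      rw [deriv_zero_of_not_differentiableAt hnd] at hpos
      exact lt_irrefl 0 hpos
    have h0mem : (0:ℝ) ∈ s := ⟨le_refl 0, zero_le_one⟩
    have hnb : (𝓝[Ioo (0:ℝ) 1] (0:ℝ)).NeBot := by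
      apply mem_closure_iff_nhdsWithin_neBot.1
      rw [closure_Ioo one_ne_zero.symm]
      exact h0mem
    have hg0 : g 0 = 0 := by
      have t1 : Tendsto g (𝓝[Ioo (0:ℝ) 1] 0) (𝓝 (g 0)) :=
        (hgc 0 h0mem).mono_left (nhdsWithin_mono _ Ioo_subset_Icc_self)
      have t2 : Tendsto (deriv f) (𝓝[Ioo (0:ℝ) 1] 0) (𝓝 (deriv f 0)) :=
        (hdiff0.continuousAt.continuousWithinAt)
      have heq : g =ᶠ[𝓝[Ioo (0:ℝ) 1] (0:ℝ)] deriv f :=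
        eventuallyEq_of_mem self_mem_nhdsWithin (fun y hy => (hIoo y hy).symm)
      have := tendsto_nhds_unique (t1.congr' heq) t2
      rw [hb0] at this; exact this
    have hGd : HasDerivWithinAt g (G 0) s 0 := (hgd 0 h0mem).hasDerivWithinAt
    have hhd : HasDerivWithinAt (deriv f) (deriv (deriv f) 0) s 0 :=
      hdiff0.hasDerivAt.hasDerivWithinAt
    have hnb2 : (𝓝[s \ {0}] (0:ℝ)).NeBot :=
      hnb.mono (nhdsWithin_mono _ (fun y hy => ⟨Ioo_subset_Icc_self hy, by simp [hy.1.ne']⟩))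
    have heqs : slope g 0 =ᶠ[𝓝[s \ {0}] (0:ℝ)] slope (deriv f) 0 := by
      have hev0 : ∀ᶠ y in 𝓝[s \ {0}] (0:ℝ), y < 1 :=
        ((eventually_lt_nhds zero_lt_one).filter_mono nhdsWithin_le_nhds)
      filter_upwards [self_mem_nhdsWithin, hev0] with y hy hy1
      have hyne : y ≠ 0 := by simpa using hy.2
      have hyI : y ∈ Ioo (0:ℝ) 1 := ⟨lt_of_le_of_ne hy.1.1 (Ne.symm hyne), hy1⟩
      rw [slope_def_field, slope_def_field, hIoo y hyI, hg0, hb0]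
    have hG0 : G 0 = deriv (deriv f) 0 :=
      tendsto_nhds_unique
        ((hasDerivWithinAt_iff_tendsto_slope.1 hGd).congr' heqs)
        (hasDerivWithinAt_iff_tendsto_slope.1 hhd)
    have hG0pos : 0 < G 0 := by rw [hG0]; exact hpos
    have hevG : ∀ᶠ y in 𝓝 (0:ℝ), y ∈ s → 0 < G y :=
      eventually_nhdsWithin_iff.1 ((hGc 0 h0mem).eventually (eventually_gt_nhds hG0pos))
    obtain ⟨η, hη, hball⟩ := Metric.eventually_nhds_iff.1 hevG
    set b : ℝ := min (η/2) (1/2) with hb_def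
    have hb0' : 0 < b := by positivity
    have hb1' : b < 1 := lt_of_le_of_lt (min_le_right _ _) (by norm_num)
    have hsub : Icc 0 b ⊆ s := fun y hy => ⟨hy.1, le_trans hy.2 hb1'.le⟩
    have haG : ∀ y ∈ Icc (0:ℝ) b, 0 < G y := by
      intro y hy
      apply hball _ (hsub hy)
      rw [Real.dist_eq]
      have : |y - 0| = y := by rw [sub_zero, abs_of_nonneg hy.1]
      rw [this]
      exact lt_of_le_of_lt (le_trans hy.2 (min_le_left _ _)) (by linarith)
    have hmono_g : StrictMonoOn g (Icc 0 b) := by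
      apply strictMonoOn_of_deriv_pos (convex_Icc 0 b) (hgc.mono hsub)
      intro y hy
      rw [interior_Icc] at hy
      have hyI : y ∈ Ioo (0:ℝ) 1 := ⟨hy.1, lt_trans hy.2 hb1'⟩
      rw [hIoo2 y hyI]
      exact haG y ⟨hy.1.le, hy.2.le⟩
    have hmono_f : StrictMonoOn f (Icc 0 b) := by
      apply strictMonoOn_of_deriv_pos (convex_Icc 0 b) (hf.continuousOn.mono hsub)
      intro y hy
      rw [interior_Icc] at hy
      have hyI : y ∈ Ioo (0:ℝ) 1 := ⟨hy.1, lt_trans hy.2 hb1'⟩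
      rw [hIoo y hyI]
      have := hmono_g ⟨le_refl 0, hb0'.le⟩ ⟨hy.1.le, hy.2.le⟩ hy.1
      rw [hg0] at this
      exact this
    have hcontra := hmono_f ⟨le_refl 0, hb0'.le⟩ ⟨hb0'.le, le_refl b⟩ hb0'
    have := hmax b (hsub ⟨hb0'.le, le_refl b⟩)
    linarith
  rcases eq_or_lt_of_le hx.2 with h1 | h1
  · -- x = 1
    subst h1
    by_contra hpos
    push_neg at hpos
    have hdiff1 : DifferentiableAt ℝ (deriv f) 1 := by
      by_contra hnd
      rw [deriv_zero_of_not_differentiableAt hnd] at hpos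
      exact lt_irrefl 0 hpos
    have h1mem : (1:ℝ) ∈ s := ⟨zero_le_one, le_refl 1⟩
    have hnb : (𝓝[Ioo (0:ℝ) 1] (1:ℝ)).NeBot := by
      apply mem_closure_iff_nhdsWithin_neBot.1
      rw [closure_Ioo one_ne_zero.symm]
      exact h1mem
    have hg1 : g 1 = 0 := by
      have t1 : Tendsto g (𝓝[Ioo (0:ℝ) 1] 1) (𝓝 (g 1)) :=
        (hgc 1 h1mem).mono_left (nhdsWithin_mono _ Ioo_subset_Icc_self)
      have t2 : Tendsto (deriv f) (𝓝[Ioo (0:ℝ) 1] 1) (𝓝 (deriv f 1)) :=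
        (hdiff1.continuousAt.continuousWithinAt)
      have heq : g =ᶠ[𝓝[Ioo (0:ℝ) 1] (1:ℝ)] deriv f :=
        eventuallyEq_of_mem self_mem_nhdsWithin (fun y hy => (hIoo y hy).symm)
      have := tendsto_nhds_unique (t1.congr' heq) t2
      rw [hb1] at this; exact this
    have hGd : HasDerivWithinAt g (G 1) s 1 := (hgd 1 h1mem).hasDerivWithinAt
    have hhd : HasDerivWithinAt (deriv f) (deriv (deriv f) 1) s 1 :=
      hdiff1.hasDerivAt.hasDerivWithinAt
    have hnb2 : (𝓝[s \ {1}] (1:ℝ)).NeBot :=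
      hnb.mono (nhdsWithin_mono _ (fun y hy => ⟨Ioo_subset_Icc_self hy, by simp [hy.2.ne]⟩))
    have heqs : slope g 1 =ᶠ[𝓝[s \ {1}] (1:ℝ)] slope (deriv f) 1 := by
      have hev0 : ∀ᶠ y in 𝓝[s \ {1}] (1:ℝ), 0 < y :=
        ((eventually_gt_nhds zero_lt_one).filter_mono nhdsWithin_le_nhds)
      filter_upwards [self_mem_nhdsWithin, hev0] with y hy hy0
      have hyne : y ≠ 1 := by simpa using hy.2
      have hyI : y ∈ Ioo (0:ℝ) 1 := ⟨hy0, lt_of_le_of_ne hy.1.2 hyne⟩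
      rw [slope_def_field, slope_def_field, hIoo y hyI, hg1, hb1]
    have hG1 : G 1 = deriv (deriv f) 1 :=
      tendsto_nhds_unique
        ((hasDerivWithinAt_iff_tendsto_slope.1 hGd).congr' heqs)
        (hasDerivWithinAt_iff_tendsto_slope.1 hhd)
    have hG1pos : 0 < G 1 := by rw [hG1]; exact hpos
    have hevG : ∀ᶠ y in 𝓝 (1:ℝ), y ∈ s → 0 < G y :=
      eventually_nhdsWithin_iff.1 ((hGc 1 h1mem).eventually (eventually_gt_nhds hG1pos))
    obtain ⟨η, hη, hball⟩ := Metric.eventually_nhds_iff.1 hevG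
    set a : ℝ := max (1 - η/2) (1/2) with ha_def
    have ha1 : a < 1 := max_lt (by linarith) (by norm_num)
    have ha0 : 0 < a := lt_of_lt_of_le (by norm_num) (le_max_right _ _)
    have hsub : Icc a 1 ⊆ s := fun y hy => ⟨le_trans ha0.le hy.1, hy.2⟩
    have haG : ∀ y ∈ Icc a 1, 0 < G y := by
      intro y hy
      apply hball _ (hsub hy)
      rw [Real.dist_eq]
      have h1 : |y - 1| = 1 - y := by rw [abs_of_nonpos (by linarith [hy.2])]; ring
      rw [h1]
      have : a ≤ y := hy.1
      have : 1 - η/2 ≤ y := le_trans (le_max_left _ _) hy.1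
      linarith
    have hmono_g : StrictMonoOn g (Icc a 1) := by
      apply strictMonoOn_of_deriv_pos (convex_Icc a 1) (hgc.mono hsub)
      intro y hy
      rw [interior_Icc] at hy
      have hyI : y ∈ Ioo (0:ℝ) 1 := ⟨lt_trans ha0 hy.1, hy.2⟩
      rw [hIoo2 y hyI]
      exact haG y ⟨hy.1.le, hy.2.le⟩
    have hanti_f : StrictAntiOn f (Icc a 1) := by
      apply strictAntiOn_of_deriv_neg (convex_Icc a 1) (hf.continuousOn.mono hsub)
      intro y hy
      rw [interior_Icc] at hy
      have hyI : y ∈ Ioo (0:ℝ) 1 := ⟨lt_trans ha0 hy.1, hy.2⟩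
      rw [hIoo y hyI]
      have := hmono_g ⟨hy.1.le, hy.2.le⟩ ⟨ha1.le, le_refl 1⟩ hy.2
      rw [hg1] at this
      exact this
    have hcontra := hanti_f ⟨le_refl a, ha1.le⟩ ⟨ha1.le, le_refl 1⟩ ha1
    have := hmax a (hsub ⟨le_refl a, ha1.le⟩)
    linarith
  · -- interior
    by_contra hpos
    push_neg at hpos
    have hxI : x ∈ Ioo (0:ℝ) 1 := ⟨h0, h1⟩
    have hGx : 0 < G x := by rw [← hIoo3 x hxI]; exact hpos
    have hGat : ContinuousAt G x := (hGc x hx).continuousAt (Icc_mem_nhds h0 h1)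
    have hev1 : ∀ᶠ y in 𝓝 x, 0 < G y := hGat.eventually (eventually_gt_nhds hGx)
    have hev2 : ∀ᶠ y in 𝓝 x, y ∈ Ioo (0:ℝ) 1 := isOpen_Ioo.eventually_mem hxI
    obtain ⟨η, hη, hball⟩ := Metric.eventually_nhds_iff.1 (hev1.and hev2)
    set b : ℝ := x + η/2 with hb_def
    have hbx : x < b := by simp [hb_def]; linarith
    have hsub2 : ∀ y ∈ Icc x b, 0 < G y ∧ y ∈ Ioo (0:ℝ) 1 := by
      intro y hy
      apply hball
      rw [Real.dist_eq, abs_of_nonneg (by linarith [hy.1])]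
      have := hy.2
      simp only [hb_def] at this
      linarith
    have hsub : Icc x b ⊆ s := fun y hy => Ioo_subset_Icc_self (hsub2 y hy).2
    have hgx : g x = 0 := by
      rw [← hIoo x hxI]
      exact IsLocalMax.deriv_eq_zero
        ((isMaxOn_iff.2 hmax).isLocalMax (Icc_mem_nhds h0 h1))
    have hmono_g : StrictMonoOn g (Icc x b) := by
      apply strictMonoOn_of_deriv_pos (convex_Icc x b) (hgc.mono hsub)
      intro y hy
      rw [interior_Icc] at hy
      have hyc : y ∈ Icc x b := ⟨hy.1.le, hy.2.le⟩
      rw [hIoo2 y (hsub2 y hyc).2]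
      exact (hsub2 y hyc).1
    have hmono_f : StrictMonoOn f (Icc x b) := by
      apply strictMonoOn_of_deriv_pos (convex_Icc x b) (hf.continuousOn.mono hsub)
      intro y hy
      rw [interior_Icc] at hy
      have hyc : y ∈ Icc x b := ⟨hy.1.le, hy.2.le⟩
      rw [hIoo y (hsub2 y hyc).2]
      have := hmono_g ⟨le_refl x, hbx.le⟩ hyc hy.1
      rw [hgx] at this
      exact this
    have hcontra := hmono_f ⟨le_refl x, hbx.le⟩ ⟨hbx.le, le_refl b⟩ hbx
    have := hmax b (hsub ⟨hbx.le, le_refl b⟩)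
    linarith

/-- Uniform boundedness of the mass of `w`: for nonnegative solutions of
`∂ₜw = Dw·∂ₓₓw − w − u²·w + κ1` on `[0,1]` with homogeneous Neumann boundary conditions,
`limsup_{t→∞} ‖w(t,·)‖_{L¹(0,1)} ≤ κ1`. -/
theorem stmt_16 (a1 d1 κ1 Dw : ℝ) (ha1 : 0 < a1) (hd1 : 0 < d1) (hκ1 : 0 < κ1)
    (hDw : 0 < Dw)
    (u w wt : ℝ → ℝ → ℝ)
    (hpde : ∀ t : ℝ, 0 ≤ t → ∀ x ∈ Set.Icc (0 : ℝ) 1,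
      HasDerivAt (fun s => w s x) (wt t x) t ∧
      wt t x = Dw * deriv (deriv (w t)) x - w t x - (u t x) ^ 2 * w t x + κ1)
    (hreg : ∀ t : ℝ, 0 ≤ t →
      ContDiffOn ℝ 2 (w t) (Set.Icc (0 : ℝ) 1) ∧
      deriv (w t) 0 = 0 ∧ deriv (w t) 1 = 0)
    (hcw : ContinuousOn (fun p : ℝ × ℝ => w p.1 p.2)
      (Set.Ici (0 : ℝ) ×ˢ Set.Icc (0 : ℝ) 1))
    (hcwt : ContinuousOn (fun p : ℝ × ℝ => wt p.1 p.2)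
      (Set.Ici (0 : ℝ) ×ˢ Set.Icc (0 : ℝ) 1))
    (hnn : ∀ t : ℝ, 0 ≤ t → ∀ x ∈ Set.Icc (0 : ℝ) 1, 0 ≤ w t x) :
    ∀ ε : ℝ, 0 < ε → ∃ T : ℝ, 0 ≤ T ∧ ∀ t : ℝ, T ≤ t →
      ∫ x in (0 : ℝ)..1, w t x ≤ κ1 + ε := by
  intro ε hε
  -- A bound on the initial data
  obtain ⟨x₀, hx₀s, hx₀max⟩ := isCompact_Icc.exists_isMaxOn (nonempty_Icc.2 zero_le_one)
    ((hreg 0 le_rfl).1.continuousOn)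
  set A : ℝ := w 0 x₀ + 1 with hA_def
  have hA1 : 1 ≤ A := by have := hnn 0 le_rfl x₀ hx₀s; simp [hA_def]; linarith
  have hA0 : 0 < A := by linarith
  set δ : ℝ := ε/2 with hδ_def
  have hδ : 0 < δ := by positivity
  set φ : ℝ → ℝ := fun t => κ1 + δ + A * Real.exp (-t/2) with hφ_def
  -- key pointwise claim
  have key : ∀ t, 0 ≤ t → ∀ x ∈ Icc (0:ℝ) 1, w t x < φ t := by
    by_contra hcon
    push_neg at hcon
    obtain ⟨t₁, ht₁, x₁, hx₁, hge⟩ := hcon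
    set K : Set (ℝ×ℝ) := Icc 0 t₁ ×ˢ Icc 0 1 with hK_def
    set C : Set (ℝ×ℝ) := K ∩ {p | φ p.1 ≤ w p.1 p.2} with hC_def
    have hKc : IsCompact K := isCompact_Icc.prod isCompact_Icc
    have hKsub : K ⊆ Ici 0 ×ˢ Icc 0 1 := prod_mono Icc_subset_Ici_self subset_rfl
    have hφc : Continuous φ := by
      apply Continuous.add continuous_const
      exact continuous_const.mul (Real.continuous_exp.comp (continuous_id.neg.div_const 2))
    have hψ : ContinuousOn (fun p : ℝ×ℝ => w p.1 p.2 - φ p.1) K :=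
      (hcw.mono hKsub).sub ((hφc.comp continuous_fst).continuousOn)
    have hCclosed : IsClosed C := by
      have hCeq : C = K ∩ (fun p : ℝ×ℝ => w p.1 p.2 - φ p.1) ⁻¹' (Ici 0) := by
        ext p; simp [hC_def, sub_nonneg]
      rw [hCeq]
      exact hψ.preimage_isClosed_of_isClosed hKc.isClosed isClosed_Ici
    have hCcomp : IsCompact C := hKc.of_isClosed_subset hCclosed inter_subset_left
    set S : Set ℝ := Prod.fst '' C with hS_def
    have hSne : S.Nonempty := ⟨t₁, ⟨(t₁,x₁), ⟨⟨⟨ht₁, le_refl t₁⟩, hx₁⟩, hge⟩, rfl⟩⟩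
    have hScomp : IsCompact S := hCcomp.image continuous_fst
    have hSbdd : BddBelow S := hScomp.bddBelow
    set T : ℝ := sInf S with hT_def
    have hTS : T ∈ S := hScomp.isClosed.csInf_mem hSne hSbdd
    obtain ⟨⟨T', xw⟩, hmem, hfst⟩ := hTS
    simp only at hfst
    subst hfst
    have hT01 : T ∈ Icc 0 t₁ := hmem.1.1
    have hTxw : xw ∈ Icc (0:ℝ) 1 := hmem.1.2
    have hTw : φ T ≤ w T xw := hmem.2
    have hT0 : 0 < T := by
      rcases eq_or_lt_of_le hT01.1 with h | h
      · exfalso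
        have h1 : w 0 xw ≤ w 0 x₀ := hx₀max hTxw
        have h2 : φ 0 ≤ w 0 xw := by rw [h]; exact hTw
        have h3 : φ 0 = κ1 + δ + A := by simp [hφ_def]
        linarith
      · exact h
    have hbefore : ∀ s, 0 ≤ s → s < T → ∀ x ∈ Icc (0:ℝ) 1, w s x < φ s := by
      intro s hs hsT x hx
      by_contra hge'
      push_neg at hge'
      have hsS : s ∈ S := ⟨(s,x), ⟨⟨⟨hs, le_trans hsT.le hT01.2⟩, hx⟩, hge'⟩, rfl⟩
      exact absurd (csInf_le hSbdd hsS) (not_le.2 hsT)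
    -- maximizer in space at time T
    obtain ⟨z, hzs, hzmax⟩ := isCompact_Icc.exists_isMaxOn (nonempty_Icc.2 zero_le_one)
      ((hreg T hT0.le).1.continuousOn)
    have hwz : φ T ≤ w T z := le_trans hTw (hzmax hTxw)
    obtain ⟨hDer, hEq⟩ := hpde T hT0.le z hzs
    -- second spatial derivative nonpositive at the max
    have hD2 : deriv (deriv (w T)) z ≤ 0 :=
      aux_second_deriv_nonpos (w T) (hreg T hT0.le).1 (hreg T hT0.le).2.1
        (hreg T hT0.le).2.2 hzs (fun y hy => hzmax hy)
    -- time derivative bound at (T, z)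
    have hφd : HasDerivAt φ (A * Real.exp (-T/2) * (-(1/2))) T := by
      have h1 : HasDerivAt (fun t : ℝ => -t/2) (-(1/2)) T := by
        exact ((hasDerivAt_id T).neg.div_const 2).congr_deriv (by norm_num)
      have h2 := (Real.hasDerivAt_exp (-T/2)).comp T h1
      have h3 := h2.const_mul A
      have h4 := h3.const_add (κ1 + δ)
      exact h4.congr_deriv (by ring)
    have hFd : HasDerivAt (fun s => w s z - φ s)
        (wt T z - A * Real.exp (-T/2) * (-(1/2))) T := hDer.sub hφd
    have htd : 0 ≤ wt T z - A * Real.exp (-T/2) * (-(1/2)) := by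
      apply aux_deriv_nonneg_left hFd hT0
      intro s hs hsT
      have h1 : w s z < φ s := hbefore s hs hsT z hzs
      have h2 : 0 ≤ w T z - φ T := by linarith
      linarith
    -- PDE inequality
    have huw : 0 ≤ (u T z) ^ 2 * w T z := mul_nonneg (sq_nonneg _) (hnn T hT0.le z hzs)
    have hDwD2 : Dw * deriv (deriv (w T)) z ≤ 0 := mul_nonpos_of_nonneg_of_nonpos hDw.le hD2
    have hE : 0 < Real.exp (-T/2) := Real.exp_pos _
    have hφT : φ T = κ1 + δ + A * Real.exp (-T/2) := rfl
    have e1 : wt T z ≤ κ1 - w T z := by linarith [hEq, hDwD2, huw]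
    have e2 : κ1 + δ + A * Real.exp (-T/2) ≤ w T z := by rw [hφT] at hwz; linarith [hwz]
    have e3 : -(A * Real.exp (-T/2))/2 ≤ wt T z := by linarith [htd]
    have e4 : 0 < A * Real.exp (-T/2) := mul_pos hA0 hE
    linarith [e1, e2, e3, e4, hδ]
  -- conclude
  refine ⟨max 0 (2 * Real.log (2*A/ε)), le_max_left _ _, ?_⟩
  intro t ht
  have ht0 : 0 ≤ t := le_trans (le_max_left _ _) ht
  have hexp : A * Real.exp (-t/2) ≤ ε/2 := by
    have h1 : 2 * Real.log (2*A/ε) ≤ t := le_trans (le_max_right _ _) ht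
    have h2 : Real.exp (-t/2) ≤ ε/(2*A) := by
      rw [show ε/(2*A) = Real.exp (Real.log (ε/(2*A))) from (Real.exp_log (by positivity)).symm]
      apply Real.exp_le_exp.2
      have hlog : Real.log (ε/(2*A)) = - Real.log (2*A/ε) := by
        rw [← Real.log_inv]
        congr 1
        field_simp
      rw [hlog]; linarith
    calc A * Real.exp (-t/2) ≤ A * (ε/(2*A)) := by
          exact mul_le_mul_of_nonneg_left h2 hA0.le
      _ = ε/2 := by field_simp
  have hb : ∀ x ∈ Icc (0:ℝ) 1, w t x ≤ κ1 + ε := by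
    intro x hx
    have := key t ht0 x hx
    have hφt : φ t = κ1 + δ + A * Real.exp (-t/2) := rfl
    rw [hφt] at this
    simp only [hδ_def] at this
    linarith
  have hint : IntervalIntegrable (w t) MeasureTheory.volume 0 1 := by
    apply ContinuousOn.intervalIntegrable
    rw [uIcc_of_le zero_le_one]
    exact (hreg t ht0).1.continuousOn
  calc ∫ x in (0:ℝ)..1, w t x ≤ ∫ _x in (0:ℝ)..1, (κ1+ε) :=
        intervalIntegral.integral_mono_on zero_le_one hint intervalIntegrable_const
          (fun x hx => hb x hx)
    _ = κ1 + ε := by simp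
end
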